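/- arXiv:1106.2993 — 2 statements merged into one kernel-verified Lean document; each statement's English description precedes it below -/
import Mathlib

section
/- Let 0 < b < 1/2, let μ* be the symmetric branching measure on C with constant parameter b, and let T be the associated capacity. Let λ be the fair-coin measure on 2^ℕ, i.e. the Borel probability measure with λ(I(σ)) = 2^{−|σ|} for every binary string σ. Then for every c < 1 there exists a nonempty closed set Q ⊆ 2^ℕ with λ(Q) = 0 and T(Q) ≥ c. -/
open Set MeasureTheory Topology Filter

/-- Cantor space `2^ℕ`. -/
abbrev Cantor : Type := ℕ → Bool

/-- The basic interval `I(σ)` of all extensions of the finite binary string `σ`. -/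
def cyl (σ : List Bool) : Set Cantor :=
  {x | ∀ i : Fin σ.length, x i = σ.get i}

/-- The space `C` of nonempty closed subsets of Cantor space. -/
abbrev CC : Type := {K : Set Cantor // K.Nonempty ∧ IsClosed K}

/-- The hit-or-miss topology on `C`, generated by the sets
`V(U) = {K : K ∩ U ≠ ∅}` and `W(U) = {K : K ⊆ U}` for `U` open. -/
instance (priority := 10000) hitMissTop : TopologicalSpace CC :=
  TopologicalSpace.generateFrom
    ({S | ∃ U : Set Cantor, IsOpen U ∧ S = {K : CC | (K.1 ∩ U).Nonempty}} ∪
     {S | ∃ U : Set Cantor, IsOpen U ∧ S = {K : CC | K.1 ⊆ U}})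

/-- The Borel σ-algebra of the hit-or-miss topology. -/
instance (priority := 10000) hitMissMeasurable : MeasurableSpace CC := borel CC

/-- `A` is a finite tree of height `n` without dead ends. -/
def FinTree (n : ℕ) (A : Finset (List Bool)) : Prop :=
  A.Nonempty ∧
  (∀ σ ∈ A, σ.length ≤ n) ∧
  (∀ σ τ : List Bool, σ <+: τ → τ ∈ A → σ ∈ A) ∧
  (∀ σ ∈ A, σ.length < n → σ ++ [false] ∈ A ∨ σ ++ [true] ∈ A)

/-- `U_A = {K ∈ C : T_K ∩ {0,1}^{≤ n} = A}`. -/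
def UA (n : ℕ) (A : Finset (List Bool)) : Set CC :=
  {K | ∀ σ : List Bool, σ.length ≤ n → (σ ∈ A ↔ (K.1 ∩ cyl σ).Nonempty)}

/-- The weight of a node `σ` of `A` in the symmetric branching process with parameter `β`. -/
noncomputable def symWeight (β : List Bool → ℝ) (A : Finset (List Bool)) (σ : List Bool) : ℝ :=
  if σ ++ [false] ∈ A ∧ σ ++ [true] ∈ A then 1 - 2 * β σ else β σ

/-- `μ` is the symmetric branching measure on `C` with parameter `β`. -/
def IsSymBranching (β : List Bool → ℝ) (μ : Measure CC) : Prop :=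
  IsProbabilityMeasure μ ∧
  ∀ (n : ℕ) (A : Finset (List Bool)), FinTree n A →
    (μ (UA n A)).toReal = ∏ σ ∈ A.filter (fun σ => σ.length < n), symWeight β A σ

/-- The weight of a node `σ` of `A` in the `(b₀,b₁)`-branching process. -/
noncomputable def asymWeight (b0 b1 : ℝ) (A : Finset (List Bool)) (σ : List Bool) : ℝ :=
  if σ ++ [false] ∈ A ∧ σ ++ [true] ∈ A then 1 - b0 - b1
  else if σ ++ [false] ∈ A then b0 else b1

/-- `μ` is the `(b₀,b₁)`-branching measure on `C`. -/
def IsBranching (b0 b1 : ℝ) (μ : Measure CC) : Prop :=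
  IsProbabilityMeasure μ ∧
  ∀ (n : ℕ) (A : Finset (List Bool)), FinTree n A →
    (μ (UA n A)).toReal = ∏ σ ∈ A.filter (fun σ => σ.length < n), asymWeight b0 b1 A σ

/-- The capacity `T(Q) = μ*({K ∈ C : K ∩ Q ≠ ∅})` associated to a measure on `C`. -/
noncomputable def cap (μ : Measure CC) (Q : Set Cantor) : ℝ :=
  (μ {K : CC | (K.1 ∩ Q).Nonempty}).toReal

section Basics
open Classical

lemma cyl_nil : cyl [] = Set.univ := by
  ext x; simp [cyl]

lemma mem_cyl_append (σ : List Bool) (d : Bool) (x : Cantor) :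
    x ∈ cyl (σ ++ [d]) ↔ x ∈ cyl σ ∧ x σ.length = d := by
  constructor
  · intro h
    constructor
    · intro i
      have := h ⟨i.1, by simp [i.2]⟩
      simpa [List.getElem_append, i.2] using this
    · have := h ⟨σ.length, by simp⟩
      simpa using this
  · rintro ⟨h1, h2⟩ i
    rcases Nat.lt_or_ge i.1 σ.length with hi | hi
    · have := h1 ⟨i.1, hi⟩
      simp only [List.get_eq_getElem]
      rw [List.getElem_append_left hi]
      exact this
    · have : i.1 = σ.length := by have := i.2; simp at this; omega
      simp only [List.get_eq_getElem, this]
      simpa [List.getElem_append_right] using h2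

lemma cyl_mono {σ τ : List Bool} (h : σ <+: τ) : cyl τ ⊆ cyl σ := by
  intro x hx i
  obtain ⟨r, rfl⟩ := h
  have := hx ⟨i.1, by simp; omega⟩
  simp only [List.get_eq_getElem] at this ⊢
  rwa [List.getElem_append_left i.2] at this

def pref (x : Cantor) (n : ℕ) : List Bool := List.ofFn (fun i : Fin n => x i)

@[simp] lemma pref_length (x : Cantor) (n : ℕ) : (pref x n).length = n := by simp [pref]

lemma mem_cyl_pref (x : Cantor) (n : ℕ) : x ∈ cyl (pref x n) := by
  intro i
  simp only [List.get_eq_getElem]; simp [pref]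

lemma mem_cyl_iff_pref (x : Cantor) (σ : List Bool) : x ∈ cyl σ ↔ pref x σ.length = σ := by
  constructor
  · intro h
    apply List.ext_get (by simp)
    intro i h1 h2
    have := h ⟨i, h2⟩
    simpa [pref, List.get_ofFn] using this
  · intro h
    rw [← h]; exact mem_cyl_pref x σ.length

lemma isOpen_cyl (σ : List Bool) : IsOpen (cyl σ) := by
  have : cyl σ = ⋂ i : Fin σ.length, (fun x : Cantor => x i) ⁻¹' {σ.get i} := by
    ext x; simp [cyl]
  rw [this]
  exact isOpen_iInter_of_finite fun i => (continuous_apply (i:ℕ)).isOpen_preimage _ (isOpen_discrete _)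

lemma isClosed_cyl (σ : List Bool) : IsClosed (cyl σ) := by
  have : cyl σ = ⋂ i : Fin σ.length, (fun x : Cantor => x i) ⁻¹' {σ.get i} := by
    ext x; simp [cyl]
  rw [this]
  exact isClosed_iInter fun i => IsClosed.preimage (continuous_apply (i:ℕ)) (isClosed_discrete _)

lemma measurableSet_cyl (σ : List Bool) : MeasurableSet (cyl σ) := by
  have : cyl σ = ⋂ i : Fin σ.length, (fun x : Cantor => x i) ⁻¹' {σ.get i} := by
    ext x; simp [cyl]
  rw [this]
  exact MeasurableSet.iInter fun i => (measurable_pi_apply (i:ℕ)) (measurableSet_singleton _)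

/-- all binary strings of length ≤ n -/
def allLists : ℕ → Finset (List Bool)
  | 0 => {[]}
  | n+1 => {[]} ∪ (allLists n).image (false :: ·) ∪ (allLists n).image (true :: ·)

lemma mem_allLists (n : ℕ) (σ : List Bool) : σ ∈ allLists n ↔ σ.length ≤ n := by
  induction n generalizing σ with
  | zero => cases σ <;> simp [allLists]
  | succ n ih =>
    cases σ with
    | nil => simp [allLists]
    | cons a σ =>
      cases a <;> simp [allLists, ih, Nat.succ_le_succ_iff]

end Basics

section HitMiss
open Classical

lemma isOpen_hits {U : Set Cantor} (hU : IsOpen U) :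
    IsOpen {K : CC | (K.1 ∩ U).Nonempty} :=
  TopologicalSpace.isOpen_generateFrom_of_mem (Or.inl ⟨U, hU, rfl⟩)

lemma measurableSet_of_isOpen_CC {S : Set CC} (hS : IsOpen S) : MeasurableSet S := by
  change MeasurableSet[borel CC] S
  exact MeasurableSpace.measurableSet_generateFrom hS

lemma measurableSet_hits {U : Set Cantor} (hU : IsOpen U) :
    MeasurableSet {K : CC | (K.1 ∩ U).Nonempty} :=
  measurableSet_of_isOpen_CC (isOpen_hits hU)

lemma UA_eq_iInter (n : ℕ) (A : Finset (List Bool)) (hA : ∀ σ ∈ A, σ.length ≤ n) :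
    UA n A = ⋂ σ ∈ allLists n,
      (if σ ∈ A then {K : CC | (K.1 ∩ cyl σ).Nonempty}
       else {K : CC | (K.1 ∩ cyl σ).Nonempty}ᶜ) := by
  ext K
  simp only [UA, Set.mem_setOf_eq, Set.mem_iInter]
  constructor
  · intro h σ hσ
    rw [mem_allLists] at hσ
    by_cases hmem : σ ∈ A <;> simp [hmem, ← h σ hσ]
  · intro h σ hσ
    have := h σ ((mem_allLists n σ).2 hσ)
    by_cases hmem : σ ∈ A <;> simp [hmem] at this <;> simp [hmem, this]

lemma measurableSet_UA (n : ℕ) (A : Finset (List Bool)) (hA : ∀ σ ∈ A, σ.length ≤ n) :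
    MeasurableSet (UA n A) := by
  rw [UA_eq_iInter n A hA]
  refine Finset.measurableSet_biInter _ (fun σ _ => ?_)
  by_cases hmem : σ ∈ A
  · simpa [hmem] using measurableSet_hits (isOpen_cyl σ)
  · simpa [hmem] using (measurableSet_hits (isOpen_cyl σ)).compl

/-- the level-≤n tree of a closed set K -/
noncomputable def treeOf (K : CC) (n : ℕ) : Finset (List Bool) :=
  (allLists n).filter (fun σ => (K.1 ∩ cyl σ).Nonempty)

lemma mem_treeOf (K : CC) (n : ℕ) (σ : List Bool) :
    σ ∈ treeOf K n ↔ σ.length ≤ n ∧ (K.1 ∩ cyl σ).Nonempty := by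
  simp [treeOf, mem_allLists]

lemma finTree_treeOf (K : CC) (n : ℕ) : FinTree n (treeOf K n) := by
  refine ⟨⟨[], ?_⟩, ?_, ?_, ?_⟩
  · rw [mem_treeOf]
    exact ⟨Nat.zero_le n, by simpa [cyl_nil] using K.2.1⟩
  · intro σ hσ; exact ((mem_treeOf K n σ).1 hσ).1
  · intro σ τ hpre hτ
    rw [mem_treeOf] at hτ ⊢
    exact ⟨le_trans (by simpa using hpre.length_le) hτ.1,
      hτ.2.mono (Set.inter_subset_inter_right _ (cyl_mono hpre))⟩
  · intro σ hσ hlen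
    rw [mem_treeOf] at hσ
    obtain ⟨x, hxK, hxσ⟩ := hσ.2
    rcases Bool.dichotomy (x σ.length) with hd | hd
    · left
      rw [mem_treeOf]
      exact ⟨by simp; omega, ⟨x, hxK, (mem_cyl_append σ false x).2 ⟨hxσ, hd⟩⟩⟩
    · right
      rw [mem_treeOf]
      exact ⟨by simp; omega, ⟨x, hxK, (mem_cyl_append σ true x).2 ⟨hxσ, hd⟩⟩⟩

lemma mem_UA_treeOf (K : CC) (n : ℕ) : K ∈ UA n (treeOf K n) := by
  intro σ hσ
  rw [mem_treeOf]
  simp [hσ]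

lemma UA_eq_treeOf {K : CC} {n : ℕ} {A : Finset (List Bool)}
    (hA : ∀ σ ∈ A, σ.length ≤ n) (h : K ∈ UA n A) : A = treeOf K n := by
  ext σ
  rw [mem_treeOf]
  constructor
  · intro hσ
    exact ⟨hA σ hσ, (h σ (hA σ hσ)).1 hσ⟩
  · rintro ⟨h1, h2⟩
    exact (h σ h1).2 h2

end HitMiss

section Partition
open Classical

/-- set of all finite trees of height n without dead ends -/
noncomputable def Trees (n : ℕ) : Finset (Finset (List Bool)) :=
  ((allLists n).powerset).filter (fun A => FinTree n A)

lemma mem_Trees (n : ℕ) (A : Finset (List Bool)) :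
    A ∈ Trees n ↔ FinTree n A := by
  simp only [Trees, Finset.mem_filter, Finset.mem_powerset, and_iff_right_iff_imp]
  intro hA σ hσ
  rw [mem_allLists]
  exact hA.2.1 σ hσ

lemma treeOf_mem_Trees (K : CC) (n : ℕ) : treeOf K n ∈ Trees n :=
  (mem_Trees n _).2 (finTree_treeOf K n)

lemma UA_disjoint (n : ℕ) : (↑(Trees n) : Set (Finset (List Bool))).PairwiseDisjoint (UA n) := by
  intro A hA B hB hAB
  rw [Function.onFun, Set.disjoint_left]
  intro K hKA hKB
  rw [Finset.mem_coe, mem_Trees] at hA hB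
  exact hAB ((UA_eq_treeOf hA.2.1 hKA).trans (UA_eq_treeOf hB.2.1 hKB).symm)

/-- the clopen approximation at level n to the constrained set -/
def QL (m n : ℕ) : Set Cantor := {x | ∀ i < n, (i+1) % (m+1) = 0 → x i = false}

/-- constrained strings of length n, at level-offset k -/
def Dk (m k n : ℕ) : Finset (List Bool) :=
  (allLists n).filter
    (fun σ => σ.length = n ∧ ∀ i : Fin σ.length, (k+i.1+1) % (m+1) = 0 → σ.get i = false)

lemma mem_Dk (m k n : ℕ) (σ : List Bool) :
    σ ∈ Dk m k n ↔ σ.length = n ∧ ∀ i : Fin σ.length, (k+i.1+1) % (m+1) = 0 → σ.get i = false := by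
  simp only [Dk, Finset.mem_filter, mem_allLists, and_iff_right_iff_imp]
  exact fun h => le_of_eq h.1

lemma isOpen_QL (m n : ℕ) : IsOpen (QL m n) := by
  have : QL m n = ⋂ i ∈ Finset.range n,
      (if (i+1) % (m+1) = 0 then (fun x : Cantor => x i) ⁻¹' {false} else Set.univ) := by
    ext x
    simp only [QL, Set.mem_setOf_eq, Set.mem_iInter, Finset.mem_range]
    constructor
    · intro h i hi
      by_cases hc : (i+1) % (m+1) = 0 <;> simp [hc, h i hi]
    · intro h i hi hc
      have := h i hi; simp [hc] at this; exact this
  rw [this]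
  refine Set.Finite.isOpen_biInter (Finset.range n).finite_toSet fun i _ => ?_
  split
  · exact (continuous_apply i).isOpen_preimage _ (isOpen_discrete _)
  · exact isOpen_univ

lemma mem_QL_iff_pref (m n : ℕ) (x : Cantor) : x ∈ QL m n ↔ pref x n ∈ Dk m 0 n := by
  rw [mem_Dk]
  constructor
  · intro h
    refine ⟨pref_length x n, fun i hi => ?_⟩
    have hg : (pref x n).get i = x i.1 := by simp only [List.get_eq_getElem]; simp [pref]
    rw [hg]
    refine h i.1 (by have := i.2; simpa using this) (by simpa using hi)
  · rintro ⟨-, h⟩ i hi hc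
    have hi' : i < (pref x n).length := by simpa using hi
    have := h ⟨i, hi'⟩ (by simpa using hc)
    simpa [pref, List.get_ofFn] using this

lemma cyl_subset_QL {m n : ℕ} {σ : List Bool} (hσ : σ ∈ Dk m 0 n) : cyl σ ⊆ QL m n := by
  intro x hx
  rw [mem_Dk] at hσ
  intro i hi hc
  have hi' : i < σ.length := by rw [hσ.1]; exact hi
  have := hx ⟨i, hi'⟩
  rw [this]
  exact hσ.2 ⟨i, hi'⟩ (by simpa using hc)

/-- trees of height n avoiding the constrained level-n strings -/
noncomputable def BadT (m n : ℕ) : Finset (Finset (List Bool)) :=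
  (Trees n).filter (fun A => ∀ σ ∈ Dk m 0 n, σ ∉ A)

/-- the K's missing QL are exactly those whose level-n tree avoids Dk -/
lemma compl_hits_QL (m n : ℕ) :
    {K : CC | (K.1 ∩ QL m n).Nonempty}ᶜ =
      ⋃ A ∈ BadT m n, UA n A := by
  ext K
  simp only [Set.mem_compl_iff, Set.mem_setOf_eq, Set.mem_iUnion, BadT, Finset.mem_filter,
    exists_prop]
  constructor
  · intro h
    refine ⟨treeOf K n, ⟨treeOf_mem_Trees K n, fun σ hσ hmem => ?_⟩, mem_UA_treeOf K n⟩
    rw [mem_treeOf] at hmem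
    obtain ⟨x, hxK, hxσ⟩ := hmem.2
    exact h ⟨x, hxK, cyl_subset_QL hσ hxσ⟩
  · rintro ⟨A, ⟨hA, hbad⟩, hKA⟩ ⟨x, hxK, hxQ⟩
    rw [mem_Trees] at hA
    have hAeq : A = treeOf K n := UA_eq_treeOf hA.2.1 hKA
    refine hbad (pref x n) ((mem_QL_iff_pref m n x).1 hxQ) ?_
    rw [hAeq, mem_treeOf]
    exact ⟨by simp, ⟨x, hxK, mem_cyl_pref x n⟩⟩

lemma measure_compl_hits_QL (μ : Measure CC) (m n : ℕ) :
    μ ({K : CC | (K.1 ∩ QL m n).Nonempty}ᶜ) =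
      ∑ A ∈ BadT m n, μ (UA n A) := by
  rw [compl_hits_QL]
  refine measure_biUnion_finset ?_ ?_
  · exact (UA_disjoint n).subset
      (by intro A hA; exact Finset.mem_coe.2 (Finset.filter_subset _ _ (Finset.mem_coe.1 hA)))
  · intro A hA
    rw [BadT, Finset.mem_filter, mem_Trees] at hA
    exact measurableSet_UA n A hA.1.2.1

end Partition

section TreeDecomp
open Classical

lemma Trees_zero : Trees 0 = {{([] : List Bool)}} := by
  ext A
  rw [mem_Trees, Finset.mem_singleton]
  constructor
  · intro hA
    ext σ
    rw [Finset.mem_singleton]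
    constructor
    · intro hσ
      have := hA.2.1 σ hσ
      exact List.eq_nil_of_length_eq_zero (Nat.le_zero.1 this)
    · rintro rfl
      obtain ⟨τ, hτ⟩ := hA.1
      have : τ = [] := List.eq_nil_of_length_eq_zero (Nat.le_zero.1 (hA.2.1 τ hτ))
      rwa [this] at hτ
  · rintro rfl
    exact ⟨⟨[], Finset.mem_singleton_self _⟩, by simp, by
      intro σ τ hpre hτ
      rw [Finset.mem_singleton] at *
      subst hτ
      exact List.eq_nil_of_length_eq_zero (Nat.le_zero.1 hpre.length_le),
      by intro σ hσ h; omega⟩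

/-- subtree in direction d -/
noncomputable def down (d : Bool) (n : ℕ) (A : Finset (List Bool)) : Finset (List Bool) :=
  (allLists n).filter (fun τ => d :: τ ∈ A)

lemma mem_down {d : Bool} {n : ℕ} {A : Finset (List Bool)} {τ : List Bool} :
    τ ∈ down d n A ↔ τ.length ≤ n ∧ d :: τ ∈ A := by
  simp [down, mem_allLists]

/-- reassembling a tree from the root -/
noncomputable def up2 (A0 A1 : Finset (List Bool)) : Finset (List Bool) :=
  {[]} ∪ A0.image (false :: ·) ∪ A1.image (true :: ·)

lemma mem_up2 {A0 A1 : Finset (List Bool)} {σ : List Bool} :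
    σ ∈ up2 A0 A1 ↔ σ = [] ∨ (∃ τ ∈ A0, σ = false :: τ) ∨ (∃ τ ∈ A1, σ = true :: τ) := by
  simp [up2, or_assoc, eq_comm]

lemma nil_mem_of_finTree {n : ℕ} {A : Finset (List Bool)} (hA : FinTree n A) : [] ∈ A := by
  obtain ⟨τ, hτ⟩ := hA.1
  exact hA.2.2.1 [] τ List.nil_prefix hτ

lemma down_eq_of_not_mem {d : Bool} {n : ℕ} {A : Finset (List Bool)}
    (hA : FinTree (n+1) A) (h : [d] ∉ A) : down d n A = ∅ := by
  rw [Finset.eq_empty_iff_forall_notMem]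
  intro τ hτ
  rw [mem_down] at hτ
  exact h (hA.2.2.1 [d] (d :: τ) ⟨τ, rfl⟩ hτ.2)

lemma down_mem_Trees {d : Bool} {n : ℕ} {A : Finset (List Bool)}
    (hA : FinTree (n+1) A) (h : [d] ∈ A) : down d n A ∈ Trees n := by
  rw [mem_Trees]
  refine ⟨⟨[], by rw [mem_down]; exact ⟨Nat.zero_le _, h⟩⟩, fun σ hσ => (mem_down.1 hσ).1,
    ?_, ?_⟩
  · intro σ τ hpre hτ
    rw [mem_down] at *
    exact ⟨le_trans hpre.length_le hτ.1,
      hA.2.2.1 (d :: σ) (d :: τ) (by rw [List.cons_prefix_cons]; exact ⟨rfl, hpre⟩) hτ.2⟩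
  · intro σ hσ hlen
    rw [mem_down] at hσ
    have := hA.2.2.2 (d :: σ) hσ.2 (by simp; omega)
    rcases this with h1 | h1
    · left; rw [mem_down]; exact ⟨by simp; omega, by simpa using h1⟩
    · right; rw [mem_down]; exact ⟨by simp; omega, by simpa using h1⟩

lemma up2_down {n : ℕ} {A : Finset (List Bool)} (hA : FinTree (n+1) A) :
    up2 (down false n A) (down true n A) = A := by
  ext σ
  rw [mem_up2]
  constructor
  · rintro (rfl | ⟨τ, hτ, rfl⟩ | ⟨τ, hτ, rfl⟩)
    · exact nil_mem_of_finTree hA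
    · exact (mem_down.1 hτ).2
    · exact (mem_down.1 hτ).2
  · intro hσ
    cases σ with
    | nil => exact Or.inl rfl
    | cons d τ =>
      have hlen : τ.length ≤ n := by have := hA.2.1 _ hσ; simp at this; omega
      cases d
      · exact Or.inr (Or.inl ⟨τ, mem_down.2 ⟨hlen, hσ⟩, rfl⟩)
      · exact Or.inr (Or.inr ⟨τ, mem_down.2 ⟨hlen, hσ⟩, rfl⟩)

lemma up2_mem_Trees {n : ℕ} {A0 A1 : Finset (List Bool)}
    (h0 : A0 ∈ Trees n ∨ A0 = ∅) (h1 : A1 ∈ Trees n ∨ A1 = ∅)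
    (hne : A0 ≠ ∅ ∨ A1 ≠ ∅) : up2 A0 A1 ∈ Trees (n+1) := by
  rw [mem_Trees]
  have hT : ∀ (A : Finset (List Bool)), A ∈ Trees n ∨ A = ∅ → ∀ τ ∈ A, τ.length ≤ n := by
    rintro A (hA | rfl) τ hτ
    · exact ((mem_Trees n A).1 hA).2.1 τ hτ
    · simp at hτ
  refine ⟨⟨[], by rw [mem_up2]; exact Or.inl rfl⟩, ?_, ?_, ?_⟩
  · intro σ hσ
    rw [mem_up2] at hσ
    rcases hσ with rfl | ⟨τ, hτ, rfl⟩ | ⟨τ, hτ, rfl⟩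
    · simp
    · have := hT A0 h0 τ hτ; simp; omega
    · have := hT A1 h1 τ hτ; simp; omega
  · intro σ τ hpre hτ
    rw [mem_up2] at *
    rcases hτ with rfl | ⟨ρ, hρ, rfl⟩ | ⟨ρ, hρ, rfl⟩
    · left; exact List.prefix_nil.1 hpre
    · cases σ with
      | nil => exact Or.inl rfl
      | cons e σ' =>
        rw [List.cons_prefix_cons] at hpre
        rcases h0 with hA | rfl
        · exact Or.inr (Or.inl ⟨σ', ((mem_Trees n A0).1 hA).2.2.1 σ' ρ hpre.2 hρ, by rw [hpre.1]⟩)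
        · simp at hρ
    · cases σ with
      | nil => exact Or.inl rfl
      | cons e σ' =>
        rw [List.cons_prefix_cons] at hpre
        rcases h1 with hA | rfl
        · exact Or.inr (Or.inr ⟨σ', ((mem_Trees n A1).1 hA).2.2.1 σ' ρ hpre.2 hρ, by rw [hpre.1]⟩)
        · simp at hρ
  · intro σ hσ hlen
    rw [mem_up2] at hσ
    rcases hσ with rfl | ⟨τ, hτ, rfl⟩ | ⟨τ, hτ, rfl⟩
    · -- root: some child
      rcases hne with h | h
      · rcases h0 with hA | rfl
        · obtain ⟨ρ, hρ⟩ := ((mem_Trees n A0).1 hA).1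
          have : [] ∈ A0 := ((mem_Trees n A0).1 hA).2.2.1 [] ρ List.nil_prefix hρ
          exact Or.inl (by rw [mem_up2]; exact Or.inr (Or.inl ⟨[], this, rfl⟩))
        · exact absurd rfl h
      · rcases h1 with hA | rfl
        · obtain ⟨ρ, hρ⟩ := ((mem_Trees n A1).1 hA).1
          have : [] ∈ A1 := ((mem_Trees n A1).1 hA).2.2.1 [] ρ List.nil_prefix hρ
          exact Or.inr (by rw [mem_up2]; exact Or.inr (Or.inr ⟨[], this, rfl⟩))
        · exact absurd rfl h
    · rcases h0 with hA | rfl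
      · have hA' := (mem_Trees n A0).1 hA
        have hlen' : τ.length < n := by simp at hlen; omega
        rcases hA'.2.2.2 τ hτ hlen' with h1' | h1'
        · exact Or.inl (by rw [mem_up2]; exact Or.inr (Or.inl ⟨τ ++ [false], h1', rfl⟩))
        · exact Or.inr (by rw [mem_up2]; exact Or.inr (Or.inl ⟨τ ++ [true], h1', rfl⟩))
      · simp at hτ
    · rcases h1 with hA | rfl
      · have hA' := (mem_Trees n A1).1 hA
        have hlen' : τ.length < n := by simp at hlen; omega
        rcases hA'.2.2.2 τ hτ hlen' with h1' | h1'
        · exact Or.inl (by rw [mem_up2]; exact Or.inr (Or.inr ⟨τ ++ [false], h1', rfl⟩))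
        · exact Or.inr (by rw [mem_up2]; exact Or.inr (Or.inr ⟨τ ++ [true], h1', rfl⟩))
      · simp at hτ

lemma down_up2 {n : ℕ} {A0 A1 : Finset (List Bool)} (d : Bool)
    (h0 : ∀ τ ∈ A0, τ.length ≤ n) (h1 : ∀ τ ∈ A1, τ.length ≤ n) :
    down d n (up2 A0 A1) = (if d then A1 else A0) := by
  have key : ∀ τ : List Bool, d :: τ ∈ up2 A0 A1 ↔ τ ∈ (if d then A1 else A0) := by
    intro τ
    rw [mem_up2]
    cases d
    · simp only [if_neg Bool.false_ne_true]
      constructor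
      · rintro (h | ⟨ρ, hρ, h⟩ | ⟨ρ, hρ, h⟩)
        · exact absurd h (by simp)
        · rw [List.cons.injEq] at h; rw [h.2]; exact hρ
        · rw [List.cons.injEq] at h; exact absurd h.1 (by simp)
      · intro h
        exact Or.inr (Or.inl ⟨τ, h, rfl⟩)
    · simp only [if_pos rfl]
      constructor
      · rintro (h | ⟨ρ, hρ, h⟩ | ⟨ρ, hρ, h⟩)
        · exact absurd h (by simp)
        · rw [List.cons.injEq] at h; exact absurd h.1 (by simp)
        · rw [List.cons.injEq] at h; rw [h.2]; exact hρ
      · intro h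
        exact Or.inr (Or.inr ⟨τ, h, rfl⟩)
  ext τ
  rw [mem_down, key τ]
  cases d
  · simp only [if_neg Bool.false_ne_true]
    exact and_iff_right_of_imp (h0 τ)
  · simp only [if_pos rfl]
    exact and_iff_right_of_imp (h1 τ)

end TreeDecomp

section Splitting
open Classical

lemma Dk_zero (m k : ℕ) : Dk m k 0 = {[]} := by
  ext σ
  rw [mem_Dk, Finset.mem_singleton]
  constructor
  · rintro ⟨h, -⟩; exact List.eq_nil_of_length_eq_zero h
  · rintro rfl; exact ⟨rfl, fun i => absurd i.2 (by simp)⟩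

lemma nil_not_mem_Dk (m k n : ℕ) : ([] : List Bool) ∉ Dk m k (n+1) := by
  rw [mem_Dk]; rintro ⟨h, -⟩; simp at h

lemma mem_Dk_cons (m k n : ℕ) (d : Bool) (τ : List Bool) :
    d :: τ ∈ Dk m k (n+1) ↔ τ ∈ Dk m (k+1) n ∧ ((k+1) % (m+1) = 0 → d = false) := by
  rw [mem_Dk, mem_Dk]
  constructor
  · rintro ⟨hlen, h⟩
    refine ⟨⟨by simpa using hlen, fun i hi => ?_⟩, fun hc => ?_⟩
    · have he : k + 1 + ↑i + 1 = k + (↑i + 1) + 1 := by omega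
      rw [he] at hi
      have := h ⟨i.1+1, by simp⟩ hi
      simpa using this
    · have := h ⟨0, by simp⟩ (by simpa using hc)
      simpa using this
  · rintro ⟨⟨hlen, h⟩, hc⟩
    refine ⟨by simp [hlen], fun i hi => ?_⟩
    rcases i with ⟨iv, hiv⟩
    cases iv with
    | zero => simpa using hc (by simpa using hi)
    | succ j =>
      have hj : j < τ.length := by simpa using hiv
      have he : k + (j + 1) + 1 = k + 1 + j + 1 := by omega
      simp only at hi
      rw [he] at hi
      have := h ⟨j, hj⟩ hi
      simpa using this

lemma weight_down (b : ℝ) {n : ℕ} {A : Finset (List Bool)} (d : Bool) (σ : List Bool)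
    (hσ : σ.length < n) :
    symWeight (fun _ => b) A (d :: σ) = symWeight (fun _ => b) (down d n A) σ := by
  have h : ∀ e : Bool, ((d :: σ) ++ [e] ∈ A ↔ σ ++ [e] ∈ down d n A) := by
    intro e
    rw [mem_down]
    simp only [List.cons_append]
    constructor
    · intro h; exact ⟨by simp; omega, h⟩
    · exact fun h => h.2
  simp only [symWeight, h]

lemma weight_nil (b : ℝ) (A : Finset (List Bool)) :
    symWeight (fun _ => b) A [] = if [false] ∈ A ∧ [true] ∈ A then 1 - 2*b else b := by
  simp [symWeight]

lemma filter_split {n : ℕ} {A : Finset (List Bool)} (hA : FinTree (n+1) A) :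
    A.filter (fun σ => σ.length < n+1) =
      insert []
        ((((down false n A).filter (fun σ => σ.length < n)).image (false :: ·)) ∪
         (((down true n A).filter (fun σ => σ.length < n)).image (true :: ·))) := by
  ext σ
  simp only [Finset.mem_filter, Finset.mem_insert, Finset.mem_union, Finset.mem_image]
  constructor
  · rintro ⟨hσ, hlen⟩
    cases σ with
    | nil => exact Or.inl rfl
    | cons d τ =>
      have hτ : τ ∈ down d n A := mem_down.2 ⟨by have := hA.2.1 _ hσ; simp at this; omega, hσ⟩
      have hlen' : τ.length < n := by simp at hlen; omega
      cases d
      · exact Or.inr (Or.inl ⟨τ, ⟨hτ, hlen'⟩, rfl⟩)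
      · exact Or.inr (Or.inr ⟨τ, ⟨hτ, hlen'⟩, rfl⟩)
  · rintro (rfl | ⟨τ, ⟨hτ, hlen⟩, rfl⟩ | ⟨τ, ⟨hτ, hlen⟩, rfl⟩)
    · exact ⟨nil_mem_of_finTree hA, by simp⟩
    · exact ⟨(mem_down.1 hτ).2, by simp; omega⟩
    · exact ⟨(mem_down.1 hτ).2, by simp; omega⟩

lemma prod_split (b : ℝ) {n : ℕ} {A : Finset (List Bool)} (hA : FinTree (n+1) A) :
    ∏ σ ∈ A.filter (fun σ => σ.length < n+1), symWeight (fun _ => b) A σ =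
      symWeight (fun _ => b) A [] *
      ((∏ σ ∈ (down false n A).filter (fun σ => σ.length < n),
          symWeight (fun _ => b) (down false n A) σ) *
       (∏ σ ∈ (down true n A).filter (fun σ => σ.length < n),
          symWeight (fun _ => b) (down true n A) σ)) := by
  rw [filter_split hA]
  rw [Finset.prod_insert (by
    simp only [Finset.mem_union, Finset.mem_image]
    rintro (⟨τ, -, h⟩ | ⟨τ, -, h⟩) <;> exact List.cons_ne_nil _ _ h)]
  congr 1
  rw [Finset.prod_union (by
    rw [Finset.disjoint_left]
    rintro σ h1 h2
    simp only [Finset.mem_image] at h1 h2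
    obtain ⟨τ, -, rfl⟩ := h1
    obtain ⟨ρ, -, hρ⟩ := h2
    rw [List.cons_eq_cons] at hρ
    exact Bool.false_ne_true hρ.1.symm)]
  congr 1
  · rw [Finset.prod_image (by intro a _ c _ h; exact (List.cons_eq_cons.1 h).2)]
    refine Finset.prod_congr rfl fun σ hσ => ?_
    rw [Finset.mem_filter] at hσ
    exact weight_down b false σ hσ.2
  · rw [Finset.prod_image (by intro a _ c _ h; exact (List.cons_eq_cons.1 h).2)]
    refine Finset.prod_congr rfl fun σ hσ => ?_
    rw [Finset.mem_filter] at hσ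
    exact weight_down b true σ hσ.2

lemma inter_Dk_split (m k : ℕ) {n : ℕ} {A : Finset (List Bool)} (hA : FinTree (n+1) A) :
    A ∩ Dk m k (n+1) =
      ((down false n A ∩ Dk m (k+1) n).image (false :: ·)) ∪
      (if (k+1) % (m+1) = 0 then ∅ else (down true n A ∩ Dk m (k+1) n).image (true :: ·)) := by
  ext σ
  simp only [Finset.mem_inter, Finset.mem_union, Finset.mem_image]
  constructor
  · rintro ⟨hσ, hD⟩
    cases σ with
    | nil => exact absurd hD (nil_not_mem_Dk m k n)
    | cons d τ =>
      rw [mem_Dk_cons] at hD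
      have hτ : τ ∈ down d n A := mem_down.2 ⟨by have := hA.2.1 _ hσ; simp at this; omega, hσ⟩
      by_cases hc : (k+1) % (m+1) = 0
      · have : d = false := hD.2 hc
        subst this
        exact Or.inl ⟨τ, ⟨hτ, hD.1⟩, rfl⟩
      · cases d
        · exact Or.inl ⟨τ, ⟨hτ, hD.1⟩, rfl⟩
        · right
          rw [if_neg hc]
          simp only [Finset.mem_image]
          exact ⟨τ, Finset.mem_inter.2 ⟨hτ, hD.1⟩, rfl⟩
  · rintro (⟨τ, hτ, rfl⟩ | h)
    · exact ⟨(mem_down.1 hτ.1).2, (mem_Dk_cons m k n false τ).2 ⟨hτ.2, fun _ => rfl⟩⟩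
    · by_cases hc : (k+1) % (m+1) = 0
      · rw [if_pos hc] at h; simp at h
      · rw [if_neg hc] at h
        simp only [Finset.mem_image] at h
        obtain ⟨τ, hτ, rfl⟩ := h
        rw [Finset.mem_inter] at hτ
        exact ⟨(mem_down.1 hτ.1).2, (mem_Dk_cons m k n true τ).2 ⟨hτ.2, fun hcc => absurd hcc hc⟩⟩

lemma card_Dk_split (m k : ℕ) {n : ℕ} {A : Finset (List Bool)} (hA : FinTree (n+1) A) :
    (A ∩ Dk m k (n+1)).card =
      (down false n A ∩ Dk m (k+1) n).card +
      (if (k+1) % (m+1) = 0 then 0 else (down true n A ∩ Dk m (k+1) n).card) := by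
  rw [inter_Dk_split m k hA]
  rw [Finset.card_union_of_disjoint (by
    rw [Finset.disjoint_left]
    intro σ h1 h2
    simp only [Finset.mem_image] at h1
    obtain ⟨τ, -, rfl⟩ := h1
    by_cases hc : (k+1) % (m+1) = 0
    · rw [if_pos hc] at h2; simp at h2
    · rw [if_neg hc] at h2
      simp only [Finset.mem_image] at h2
      obtain ⟨ρ, -, hρ⟩ := h2
      rw [List.cons_eq_cons] at hρ
      exact Bool.false_ne_true hρ.1.symm)]
  congr 1
  · exact Finset.card_image_of_injective _ (fun a c h => (List.cons_eq_cons.1 h).2)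
  · by_cases hc : (k+1) % (m+1) = 0
    · simp [hc]
    · rw [if_neg hc, if_neg hc]
      exact Finset.card_image_of_injective _ (fun a c h => (List.cons_eq_cons.1 h).2)

end Splitting

section KeySum
open Classical

noncomputable def Gk (b : ℝ) (m : ℕ) : ℕ → ℕ → ℝ → ℝ
  | _, 0, x => x
  | k, n+1, x =>
    if (k+1) % (m+1) = 0 then b + (1-b) * Gk b m (k+1) n x
    else 2*b*(Gk b m (k+1) n x) + (1-2*b)*(Gk b m (k+1) n x)^2

lemma Gk_zero (b : ℝ) (m k : ℕ) (x : ℝ) : Gk b m k 0 x = x := rfl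

lemma Gk_succ (b : ℝ) (m k n : ℕ) (x : ℝ) :
    Gk b m k (n+1) x =
      if (k+1) % (m+1) = 0 then b + (1-b) * Gk b m (k+1) n x
      else 2*b*(Gk b m (k+1) n x) + (1-2*b)*(Gk b m (k+1) n x)^2 := rfl

lemma Gk_one (b : ℝ) (m : ℕ) : ∀ (n k : ℕ), Gk b m k n 1 = 1 := by
  intro n
  induction n with
  | zero => intro k; rfl
  | succ n ih =>
    intro k
    rw [Gk_succ, ih (k+1)]
    by_cases h : (k+1) % (m+1) = 0 <;> simp [h] <;> ring

lemma sum_sum_mul {α : Type*} (s t : Finset α) (F G : α → ℝ) (C y z : ℝ)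
    (hF : ∑ a ∈ s, F a = y) (hG : ∑ a ∈ t, G a = z) :
    ∑ a ∈ s, ∑ c ∈ t, C * (F a * G c) = C * (y * z) := by
  have h1 : ∀ a ∈ s, ∑ c ∈ t, C * (F a * G c) = (C * z) * F a := by
    intro a _
    rw [← hG, Finset.mul_sum, Finset.sum_mul]
    refine Finset.sum_congr rfl fun c _ => by ring
  rw [Finset.sum_congr rfl h1, ← Finset.mul_sum, hF]
  ring

lemma key_sum (b : ℝ) (m : ℕ) :
    ∀ (n k : ℕ) (x : ℝ),
      ∑ A ∈ Trees n,
        (∏ σ ∈ A.filter (fun σ => σ.length < n), symWeight (fun _ => b) A σ) *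
          x ^ (A ∩ Dk m k n).card = Gk b m k n x := by
  intro n
  induction n with
  | zero =>
    intro k x
    rw [Trees_zero, Finset.sum_singleton]
    have h1 : ({[]} : Finset (List Bool)).filter (fun σ => σ.length < 0) = ∅ := by
      ext σ; simp
    have h2 : (({[]} : Finset (List Bool)) ∩ Dk m k 0) = {[]} := by rw [Dk_zero]; simp
    rw [h1, h2, Gk_zero]
    simp
  | succ n ih =>
    intro k x
    have ihx : ∑ A ∈ Trees n,
        (∏ σ ∈ A.filter (fun σ => σ.length < n), symWeight (fun _ => b) A σ) *
          x ^ (A ∩ Dk m (k+1) n).card = Gk b m (k+1) n x := ih (k+1) x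
    have ih1 : ∑ A ∈ Trees n,
        (∏ σ ∈ A.filter (fun σ => σ.length < n), symWeight (fun _ => b) A σ) = 1 := by
      have := ih (k+1) 1
      rw [Gk_one] at this
      simpa using this
    -- abbreviations
    set y := Gk b m (k+1) n x with hy
    set z : ℝ := if (k+1) % (m+1) = 0 then 1 else y with hz
    have ihz : ∑ A ∈ Trees n,
        (∏ σ ∈ A.filter (fun σ => σ.length < n), symWeight (fun _ => b) A σ) *
          (if (k+1) % (m+1) = 0 then 1 else x ^ (A ∩ Dk m (k+1) n).card) = z := by
      by_cases h : (k+1) % (m+1) = 0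
      · simp only [if_pos h]
        rw [hz, if_pos h]
        simpa using ih1
      · simp only [if_neg h]
        rw [hz, if_neg h]
        exact ihx
    -- the value of the summand in terms of the two subtrees
    have hfA : ∀ A ∈ Trees (n+1),
        (∏ σ ∈ A.filter (fun σ => σ.length < n+1), symWeight (fun _ => b) A σ) *
          x ^ (A ∩ Dk m k (n+1)).card =
        (if [false] ∈ A ∧ [true] ∈ A then 1-2*b else b) *
          (((∏ σ ∈ (down false n A).filter (fun σ => σ.length < n),
              symWeight (fun _ => b) (down false n A) σ) *
            x ^ ((down false n A) ∩ Dk m (k+1) n).card) *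
           ((∏ σ ∈ (down true n A).filter (fun σ => σ.length < n),
              symWeight (fun _ => b) (down true n A) σ) *
            (if (k+1) % (m+1) = 0 then 1
             else x ^ ((down true n A) ∩ Dk m (k+1) n).card))) := by
      intro A hA
      have hA' := (mem_Trees _ _).1 hA
      rw [prod_split b hA', card_Dk_split m k hA', weight_nil, pow_add]
      have hpow : x ^ (if (k+1) % (m+1) = 0 then 0
          else ((down true n A) ∩ Dk m (k+1) n).card) =
          if (k+1) % (m+1) = 0 then 1 else x ^ ((down true n A) ∩ Dk m (k+1) n).card := by
        by_cases h : (k+1) % (m+1) = 0 <;> simp [h]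
      rw [hpow]
      ring
    -- split the sum into three classes
    rw [← Finset.sum_filter_add_sum_filter_not (Trees (n+1)) (fun A => [false] ∈ A)]
    rw [← Finset.sum_filter_add_sum_filter_not
      ((Trees (n+1)).filter (fun A => [false] ∈ A)) (fun A => [true] ∈ A)]
    -- class with both children
    have hSB : ∑ A ∈ (((Trees (n+1)).filter (fun A => [false] ∈ A)).filter
          (fun A => [true] ∈ A)),
        (∏ σ ∈ A.filter (fun σ => σ.length < n+1), symWeight (fun _ => b) A σ) *
          x ^ (A ∩ Dk m k (n+1)).card = (1-2*b) * (y * z) := by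
      have hbij : ∑ A ∈ (((Trees (n+1)).filter (fun A => [false] ∈ A)).filter
            (fun A => [true] ∈ A)),
          (∏ σ ∈ A.filter (fun σ => σ.length < n+1), symWeight (fun _ => b) A σ) *
            x ^ (A ∩ Dk m k (n+1)).card =
          ∑ p ∈ Trees n ×ˢ Trees n,
            (1-2*b) *
              (((∏ σ ∈ p.1.filter (fun σ => σ.length < n), symWeight (fun _ => b) p.1 σ) *
                x ^ (p.1 ∩ Dk m (k+1) n).card) *
               ((∏ σ ∈ p.2.filter (fun σ => σ.length < n), symWeight (fun _ => b) p.2 σ) *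
                (if (k+1) % (m+1) = 0 then 1 else x ^ (p.2 ∩ Dk m (k+1) n).card))) := by
        refine Finset.sum_bij' (i := fun A _ => (down false n A, down true n A))
          (j := fun p _ => up2 p.1 p.2) ?_ ?_ ?_ ?_ ?_
        · intro A hA
          simp only [Finset.mem_filter] at hA
          rw [Finset.mem_product]
          have hA' := (mem_Trees _ _).1 hA.1.1
          exact ⟨down_mem_Trees hA' hA.1.2, down_mem_Trees hA' hA.2⟩
        · intro p hp
          rw [Finset.mem_product] at hp
          have h1 := (mem_Trees _ _).1 hp.1
          have h2 := (mem_Trees _ _).1 hp.2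
          simp only [Finset.mem_filter]
          refine ⟨⟨up2_mem_Trees (Or.inl hp.1) (Or.inl hp.2)
            (Or.inl (Finset.nonempty_iff_ne_empty.1 h1.1)), ?_⟩, ?_⟩
          · exact mem_up2.2 (Or.inr (Or.inl ⟨[], nil_mem_of_finTree h1, rfl⟩))
          · exact mem_up2.2 (Or.inr (Or.inr ⟨[], nil_mem_of_finTree h2, rfl⟩))
        · intro A hA
          simp only [Finset.mem_filter] at hA
          exact up2_down ((mem_Trees _ _).1 hA.1.1)
        · intro p hp
          rw [Finset.mem_product] at hp
          have h1 := (mem_Trees _ _).1 hp.1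
          have h2 := (mem_Trees _ _).1 hp.2
          have e0 := down_up2 (A0 := p.1) (A1 := p.2) false h1.2.1 h2.2.1
          have e1 := down_up2 (A0 := p.1) (A1 := p.2) true h1.2.1 h2.2.1
          simp only [if_neg Bool.false_ne_true, if_pos rfl] at e0 e1
          rw [Prod.ext_iff]
          exact ⟨e0, e1⟩
        · intro A hA
          simp only [Finset.mem_filter] at hA
          have := hfA A hA.1.1
          rw [this, if_pos ⟨hA.1.2, hA.2⟩]
      rw [hbij, Finset.sum_product]
      exact sum_sum_mul (Trees n) (Trees n)
        (fun B => (∏ σ ∈ B.filter (fun σ => σ.length < n), symWeight (fun _ => b) B σ) *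
          x ^ (B ∩ Dk m (k+1) n).card)
        (fun B => (∏ σ ∈ B.filter (fun σ => σ.length < n), symWeight (fun _ => b) B σ) *
          (if (k+1) % (m+1) = 0 then 1 else x ^ (B ∩ Dk m (k+1) n).card))
        (1-2*b) y z ihx ihz
    -- class with only the false child
    have hSF : ∑ A ∈ (((Trees (n+1)).filter (fun A => [false] ∈ A)).filter
          (fun A => ¬ [true] ∈ A)),
        (∏ σ ∈ A.filter (fun σ => σ.length < n+1), symWeight (fun _ => b) A σ) *
          x ^ (A ∩ Dk m k (n+1)).card = b * y := by
      have hbij : ∑ A ∈ (((Trees (n+1)).filter (fun A => [false] ∈ A)).filter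
            (fun A => ¬ [true] ∈ A)),
          (∏ σ ∈ A.filter (fun σ => σ.length < n+1), symWeight (fun _ => b) A σ) *
            x ^ (A ∩ Dk m k (n+1)).card =
          ∑ B ∈ Trees n,
            b * ((∏ σ ∈ B.filter (fun σ => σ.length < n), symWeight (fun _ => b) B σ) *
              x ^ (B ∩ Dk m (k+1) n).card) := by
        refine Finset.sum_bij' (i := fun A _ => down false n A)
          (j := fun B _ => up2 B ∅) ?_ ?_ ?_ ?_ ?_
        · intro A hA
          simp only [Finset.mem_filter] at hA
          exact down_mem_Trees ((mem_Trees _ _).1 hA.1.1) hA.1.2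
        · intro B hB
          have h1 := (mem_Trees _ _).1 hB
          simp only [Finset.mem_filter]
          refine ⟨⟨up2_mem_Trees (Or.inl hB) (Or.inr rfl)
            (Or.inl (Finset.nonempty_iff_ne_empty.1 h1.1)), ?_⟩, ?_⟩
          · exact mem_up2.2 (Or.inr (Or.inl ⟨[], nil_mem_of_finTree h1, rfl⟩))
          · intro hmem
            rcases mem_up2.1 hmem with h | ⟨τ, -, h⟩ | ⟨τ, hτ, -⟩
            · simp at h
            · rw [List.cons_eq_cons] at h; exact Bool.false_ne_true h.1.symm
            · simp at hτ
        · intro A hA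
          simp only [Finset.mem_filter] at hA
          have hA' := (mem_Trees _ _).1 hA.1.1
          have hdt : down true n A = ∅ := down_eq_of_not_mem hA' hA.2
          rw [← hdt]
          exact up2_down hA'
        · intro B hB
          have h1 := (mem_Trees _ _).1 hB
          have e0 := down_up2 (A0 := B) (A1 := ∅) false h1.2.1 (by simp)
          simpa using e0
        · intro A hA
          simp only [Finset.mem_filter] at hA
          have hA' := (mem_Trees _ _).1 hA.1.1
          have hdt : down true n A = ∅ := down_eq_of_not_mem hA' hA.2
          rw [hfA A hA.1.1, if_neg (by rintro ⟨-, h⟩; exact hA.2 h), hdt]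
          simp
      rw [hbij, ← Finset.mul_sum, ihx]
    -- class with only the true child
    have hST : ∑ A ∈ ((Trees (n+1)).filter (fun A => ¬ [false] ∈ A)),
        (∏ σ ∈ A.filter (fun σ => σ.length < n+1), symWeight (fun _ => b) A σ) *
          x ^ (A ∩ Dk m k (n+1)).card = b * z := by
      have htrue : ∀ A ∈ Trees (n+1), ¬ [false] ∈ A → [true] ∈ A := by
        intro A hA h
        have hA' := (mem_Trees _ _).1 hA
        rcases hA'.2.2.2 [] (nil_mem_of_finTree hA') (by simp) with h1 | h1
        · exact absurd (by simpa using h1) h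
        · simpa using h1
      have hbij : ∑ A ∈ ((Trees (n+1)).filter (fun A => ¬ [false] ∈ A)),
          (∏ σ ∈ A.filter (fun σ => σ.length < n+1), symWeight (fun _ => b) A σ) *
            x ^ (A ∩ Dk m k (n+1)).card =
          ∑ B ∈ Trees n,
            b * ((∏ σ ∈ B.filter (fun σ => σ.length < n), symWeight (fun _ => b) B σ) *
              (if (k+1) % (m+1) = 0 then 1 else x ^ (B ∩ Dk m (k+1) n).card)) := by
        refine Finset.sum_bij' (i := fun A _ => down true n A)
          (j := fun B _ => up2 ∅ B) ?_ ?_ ?_ ?_ ?_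
        · intro A hA
          simp only [Finset.mem_filter] at hA
          exact down_mem_Trees ((mem_Trees _ _).1 hA.1) (htrue A hA.1 hA.2)
        · intro B hB
          have h1 := (mem_Trees _ _).1 hB
          simp only [Finset.mem_filter]
          refine ⟨up2_mem_Trees (Or.inr rfl) (Or.inl hB)
            (Or.inr (Finset.nonempty_iff_ne_empty.1 h1.1)), ?_⟩
          intro hmem
          rcases mem_up2.1 hmem with h | ⟨τ, hτ, -⟩ | ⟨τ, -, h⟩
          · simp at h
          · simp at hτ
          · rw [List.cons_eq_cons] at h; exact Bool.false_ne_true h.1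
        · intro A hA
          simp only [Finset.mem_filter] at hA
          have hA' := (mem_Trees _ _).1 hA.1
          have hdf : down false n A = ∅ := down_eq_of_not_mem hA' hA.2
          rw [← hdf]
          exact up2_down hA'
        · intro B hB
          have h1 := (mem_Trees _ _).1 hB
          have e1 := down_up2 (A0 := ∅) (A1 := B) true (by simp) h1.2.1
          simpa using e1
        · intro A hA
          simp only [Finset.mem_filter] at hA
          have hA' := (mem_Trees _ _).1 hA.1
          have hdf : down false n A = ∅ := down_eq_of_not_mem hA' hA.2
          rw [hfA A hA.1, if_neg (by rintro ⟨h, -⟩; exact hA.2 h), hdf]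
          simp
      rw [hbij, ← Finset.mul_sum, ihz]
    rw [hSB, hSF, hST, Gk_succ, ← hy]
    by_cases h : (k+1) % (m+1) = 0
    · rw [hz, if_pos h, if_pos h]; ring
    · rw [hz, if_neg h, if_neg h]; ring

end KeySum

section Analysis

/-- iterates of the branching map, starting from `(1-b)u` -/
noncomputable def vseq (b u : ℝ) : ℕ → ℝ
  | 0 => (1-b)*u
  | t+1 => (vseq b u t) * (2 - 2*b - (1-2*b) * (vseq b u t))

lemma vseq_zero (b u : ℝ) : vseq b u 0 = (1-b)*u := rfl
lemma vseq_succ (b u : ℝ) (t : ℕ) :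
    vseq b u (t+1) = (vseq b u t) * (2 - 2*b - (1-2*b) * (vseq b u t)) := rfl

lemma vseq_mem {b u : ℝ} (hb0 : 0 < b) (hb : b < 1/2) (hu0 : 0 ≤ u) (hu1 : u ≤ 1) :
    ∀ t, (1-b)*u ≤ vseq b u t ∧ vseq b u t ≤ 1 := by
  intro t
  induction t with
  | zero =>
    rw [vseq_zero]
    exact ⟨le_refl _, mul_le_one₀ (by linarith) hu0 hu1⟩
  | succ t ih =>
    obtain ⟨h1, h2⟩ := ih
    have hw0 : 0 ≤ vseq b u t := le_trans (by nlinarith) h1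
    rw [vseq_succ]
    constructor
    · have hstep : 0 ≤ vseq b u t * (1-2*b) * (1 - vseq b u t) :=
        mul_nonneg (mul_nonneg hw0 (by linarith)) (by linarith)
      nlinarith [hstep]
    · have ha : 0 ≤ 2*b * (1 - vseq b u t) :=
        mul_nonneg (by linarith) (by linarith)
      have hbb : 0 ≤ (1-2*b) * (1 - vseq b u t)^2 :=
        mul_nonneg (by linarith) (sq_nonneg _)
      nlinarith [ha, hbb]

lemma vseq_mono {b u : ℝ} (hb0 : 0 < b) (hb : b < 1/2) (hu0 : 0 ≤ u) (hu1 : u ≤ 1) :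
    ∀ t, vseq b u t ≤ vseq b u (t+1) := by
  intro t
  obtain ⟨h1, h2⟩ := vseq_mem hb0 hb hu0 hu1 t
  have hw0 : 0 ≤ vseq b u t := le_trans (by nlinarith) h1
  rw [vseq_succ]
  have hstep : 0 ≤ vseq b u t * (1-2*b) * (1 - vseq b u t) :=
    mul_nonneg (mul_nonneg hw0 (by linarith)) (by linarith)
  nlinarith [hstep]

lemma exists_good_m {b u : ℝ} (hb0 : 0 < b) (hb : b < 1/2) (hu0 : 0 < u) (hu1 : u < 1) :
    ∃ m : ℕ, u ≤ vseq b u m := by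
  set ε : ℝ := (1-b)*u*((1-2*b)*(1-u)) with hε
  have hεpos : 0 < ε := by
    apply mul_pos (mul_pos (by linarith) hu0) (mul_pos (by linarith) (by linarith))
  obtain ⟨M, hM⟩ := exists_nat_ge (u / ε)
  have claim : ∀ t : ℕ, u ≤ vseq b u t ∨ (1-b)*u + t * ε ≤ vseq b u t := by
    intro t
    induction t with
    | zero => right; rw [vseq_zero]; simp
    | succ t ih =>
      have hmono := vseq_mono hb0 hb hu0.le hu1.le t
      rcases ih with h | h
      · left; linarith
      · rcases le_or_gt (vseq b u t) u with hle | hlt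
        · right
          obtain ⟨h1, h2⟩ := vseq_mem hb0 hb hu0.le hu1.le t
          have hw0 : 0 ≤ vseq b u t := le_trans (by nlinarith) h1
          have hgrow : vseq b u t + ε ≤ vseq b u (t+1) := by
            rw [vseq_succ]
            have hin : ε ≤ vseq b u t * ((1-2*b) * (1 - vseq b u t)) := by
              rw [hε]
              refine mul_le_mul h1 ?_ (mul_nonneg (by linarith) (by linarith)) hw0
              exact mul_le_mul_of_nonneg_left (by linarith) (by linarith)
            nlinarith [hin]
          push_cast
          linarith
        · left; linarith
  rcases claim M with h | h
  · exact ⟨M, h⟩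
  · refine ⟨M, ?_⟩
    have hMε : u ≤ M * ε := by
      rw [div_le_iff₀ hεpos] at hM
      linarith
    have hb1 : 0 ≤ (1-b)*u := by nlinarith
    linarith

lemma Gk_mem_unit {b : ℝ} (hb0 : 0 < b) (hb : b < 1/2) (m : ℕ) {x : ℝ}
    (hx0 : 0 ≤ x) (hx1 : x ≤ 1) :
    ∀ n k, 0 ≤ Gk b m k n x ∧ Gk b m k n x ≤ 1 := by
  intro n
  induction n with
  | zero => intro k; rw [Gk_zero]; exact ⟨hx0, hx1⟩
  | succ n ih =>
    intro k
    obtain ⟨h0, h1⟩ := ih (k+1)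
    rw [Gk_succ]
    by_cases h : (k+1) % (m+1) = 0
    · rw [if_pos h]
      have e1 : 0 ≤ (1-b) * Gk b m (k+1) n x := mul_nonneg (by linarith) h0
      have e2 : (1-b) * Gk b m (k+1) n x ≤ (1-b) * 1 :=
        mul_le_mul_of_nonneg_left h1 (by linarith)
      constructor <;> nlinarith [e1, e2]
    · rw [if_neg h]
      have e1 : 0 ≤ 2*b * Gk b m (k+1) n x := mul_nonneg (by linarith) h0
      have e2 : 0 ≤ (1-2*b) * (Gk b m (k+1) n x)^2 := mul_nonneg (by linarith) (sq_nonneg _)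
      have e3 : (Gk b m (k+1) n x)^2 ≤ 1 := by nlinarith
      have e4 : 2*b * Gk b m (k+1) n x ≤ 2*b := by nlinarith
      have e5 : (1-2*b) * (Gk b m (k+1) n x)^2 ≤ (1-2*b) :=
        by nlinarith
      constructor <;> nlinarith [e1, e2, e4, e5]

lemma Gk_bound {b u : ℝ} (hb0 : 0 < b) (hb : b < 1/2) (hu0 : 0 < u) (hu1 : u < 1)
    (m : ℕ) (hm : u ≤ vseq b u m) :
    ∀ n k, Gk b m k n 0 ≤ 1 - vseq b u (m - k % (m+1)) := by
  intro n
  induction n with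
  | zero =>
    intro k
    rw [Gk_zero]
    have := (vseq_mem hb0 hb hu0.le hu1.le (m - k % (m+1))).2
    linarith
  | succ n ih =>
    intro k
    have hr : k % (m+1) < m+1 := Nat.mod_lt _ (Nat.succ_pos m)
    have hmod : (k+1) % (m+1) = (k % (m+1) + 1) % (m+1) := (Nat.mod_add_mod k (m+1) 1).symm
    have hYmem := Gk_mem_unit hb0 hb m (le_refl (0:ℝ)) (by norm_num) n (k+1)
    rcases Nat.lt_or_ge (k % (m+1)) m with hlt | hge
    · -- not a constrained level
      have h1 : (k+1) % (m+1) = k % (m+1) + 1 := by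
        rw [hmod]; exact Nat.mod_eq_of_lt (by omega)
      have hne : (k+1) % (m+1) ≠ 0 := by omega
      rw [Gk_succ, if_neg hne]
      set Y := Gk b m (k+1) n 0 with hYdef
      set w := vseq b u (m - (k % (m+1) + 1)) with hwdef
      have hYb : Y ≤ 1 - w := by
        have h2 := ih (k+1)
        rw [h1] at h2
        exact h2
      have hwmem := vseq_mem hb0 hb hu0.le hu1.le (m - (k % (m+1) + 1))
      have hw0 : 0 ≤ w := le_trans (by nlinarith) hwmem.1
      have hw1 : w ≤ 1 := hwmem.2
      have hsub : m - k % (m+1) = (m - (k % (m+1) + 1)) + 1 := by omega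
      rw [hsub, vseq_succ, ← hwdef]
      have hinner : 0 ≤ 2*b + (1-2*b)*((1-w) + Y) := by
        have : 0 ≤ (1-2*b)*((1-w) + Y) :=
          mul_nonneg (by linarith) (by linarith [hYmem.1])
        linarith
      have hprod : 0 ≤ (1 - w - Y) * (2*b + (1-2*b)*((1-w) + Y)) :=
        mul_nonneg (by linarith) hinner
      nlinarith [hprod]
    · -- constrained level: k % (m+1) = m
      have hrm : k % (m+1) = m := by omega
      have h1 : (k+1) % (m+1) = 0 := by rw [hmod, hrm]; exact Nat.mod_self _
      rw [Gk_succ, if_pos h1]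
      set Y := Gk b m (k+1) n 0 with hYdef
      have hYb : Y ≤ 1 - vseq b u m := by
        have := ih (k+1)
        rwa [h1, Nat.sub_zero] at this
      rw [hrm, Nat.sub_self, vseq_zero]
      have e1 : (1-b)*Y ≤ (1-b)*(1 - vseq b u m) :=
        mul_le_mul_of_nonneg_left hYb (by linarith)
      have e2 : (1-b)*(1 - vseq b u m) ≤ (1-b)*(1-u) :=
        mul_le_mul_of_nonneg_left (by linarith) (by linarith)
      nlinarith [e1, e2]

end Analysis

section Counting
open Classical

/-- number of constrained levels below n, at offset k -/
def cntk (m k n : ℕ) : ℕ := ((Finset.range n).filter (fun i => (k+i+1) % (m+1) = 0)).card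

lemma cntk_succ (m k n : ℕ) :
    cntk m k (n+1) = cntk m (k+1) n + (if (k+1) % (m+1) = 0 then 1 else 0) := by
  unfold cntk
  rw [Finset.card_filter, Finset.card_filter, Finset.sum_range_succ']
  congr 1
  refine Finset.sum_congr rfl fun i _ => ?_
  have h : k + (i+1) + 1 = (k+1) + i + 1 := by omega
  rw [h]

lemma Dk_succ_decomp (m k n : ℕ) :
    Dk m k (n+1) =
      (Dk m (k+1) n).image (false :: ·) ∪
      (if (k+1) % (m+1) = 0 then ∅ else (Dk m (k+1) n).image (true :: ·)) := by
  ext σ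
  cases σ with
  | nil =>
    simp only [Finset.mem_union, Finset.mem_image]
    constructor
    · intro h; exact absurd h (nil_not_mem_Dk m k n)
    · rintro (⟨τ, -, h⟩ | h)
      · exact absurd h (List.cons_ne_nil _ _)
      · by_cases hc : (k+1) % (m+1) = 0
        · rw [if_pos hc] at h; simp at h
        · rw [if_neg hc] at h
          simp only [Finset.mem_image] at h
          obtain ⟨τ, -, h⟩ := h
          exact absurd h (List.cons_ne_nil _ _)
  | cons d τ =>
    rw [mem_Dk_cons]
    simp only [Finset.mem_union, Finset.mem_image]
    constructor
    · rintro ⟨hτ, hc⟩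
      by_cases h : (k+1) % (m+1) = 0
      · rw [hc h]; exact Or.inl ⟨τ, hτ, rfl⟩
      · cases d
        · exact Or.inl ⟨τ, hτ, rfl⟩
        · right
          rw [if_neg h]
          simp only [Finset.mem_image]
          exact ⟨τ, hτ, rfl⟩
    · rintro (⟨ρ, hρ, h⟩ | h)
      · rw [List.cons_eq_cons] at h
        obtain ⟨rfl, rfl⟩ := h
        exact ⟨hρ, fun _ => rfl⟩
      · by_cases hc : (k+1) % (m+1) = 0
        · rw [if_pos hc] at h; simp at h
        · rw [if_neg hc] at h
          simp only [Finset.mem_image] at h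
          obtain ⟨ρ, hρ, h⟩ := h
          rw [List.cons_eq_cons] at h
          obtain ⟨rfl, rfl⟩ := h
          exact ⟨hρ, fun hcc => absurd hcc hc⟩

lemma card_Dk (m : ℕ) : ∀ n k, (Dk m k n).card * 2 ^ (cntk m k n) = 2 ^ n := by
  intro n
  induction n with
  | zero =>
    intro k
    rw [Dk_zero]
    simp [cntk]
  | succ n ih =>
    intro k
    rw [Dk_succ_decomp, cntk_succ]
    have hinj : Function.Injective (fun τ : List Bool => false :: τ) :=
      fun a c h => (List.cons_eq_cons.1 h).2
    have hinj' : Function.Injective (fun τ : List Bool => true :: τ) :=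
      fun a c h => (List.cons_eq_cons.1 h).2
    by_cases h : (k+1) % (m+1) = 0
    · rw [if_pos h, if_pos h, Finset.union_empty, Finset.card_image_of_injective _ hinj]
      rw [pow_add, pow_one, ← mul_assoc, ih (k+1), pow_succ]
    · rw [if_neg h, if_neg h]
      rw [Finset.card_union_of_disjoint (by
        rw [Finset.disjoint_left]
        intro σ h1 h2
        simp only [Finset.mem_image] at h1 h2
        obtain ⟨τ, -, rfl⟩ := h1
        obtain ⟨ρ, -, hρ⟩ := h2
        rw [List.cons_eq_cons] at hρ
        exact Bool.false_ne_true hρ.1.symm)]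
      rw [Finset.card_image_of_injective _ hinj, Finset.card_image_of_injective _ hinj']
      rw [add_zero, pow_succ]
      have := ih (k+1)
      ring_nf
      ring_nf at this
      omega

lemma cntk_lower (m K : ℕ) : K ≤ cntk m 0 (K*(m+1)) := by
  unfold cntk
  refine le_trans (le_of_eq (Finset.card_range K).symm)
    (Finset.card_le_card_of_injOn (fun j => j*(m+1) + m) ?_ ?_)
  · intro j hj
    rw [Finset.mem_coe, Finset.mem_range] at hj
    rw [Finset.mem_coe, Finset.mem_filter, Finset.mem_range]
    constructor
    · have h2 : (j+1)*(m+1) ≤ K*(m+1) := Nat.mul_le_mul_right _ (Nat.succ_le_of_lt hj)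
      have h3 : (j+1)*(m+1) = j*(m+1)+(m+1) := by ring
      linarith
    · have h4 : 0 + (j*(m+1) + m) + 1 = (j+1)*(m+1) := by ring
      rw [h4]
      exact Nat.mul_mod_left _ _
  · intro j _ j' _ h
    simp only at h
    have : j * (m+1) = j' * (m+1) := by omega
    exact Nat.eq_of_mul_eq_mul_right (Nat.succ_pos m) this

lemma isClosed_QL (m n : ℕ) : IsClosed (QL m n) := by
  have : QL m n = ⋂ i ∈ Finset.range n,
      (if (i+1) % (m+1) = 0 then (fun x : Cantor => x i) ⁻¹' {false} else Set.univ) := by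
    ext x
    simp only [QL, Set.mem_setOf_eq, Set.mem_iInter, Finset.mem_range]
    constructor
    · intro h i hi
      by_cases hc : (i+1) % (m+1) = 0 <;> simp [hc, h i hi]
    · intro h i hi hc
      have := h i hi; simp [hc] at this; exact this
  rw [this]
  refine isClosed_biInter fun i _ => ?_
  split
  · exact IsClosed.preimage (continuous_apply i) (isClosed_discrete _)
  · exact isClosed_univ

lemma QL_decomp (m n : ℕ) : QL m n = ⋃ σ ∈ Dk m 0 n, cyl σ := by
  ext x
  simp only [Set.mem_iUnion, exists_prop]
  constructor
  · intro h
    exact ⟨pref x n, (mem_QL_iff_pref m n x).1 h, mem_cyl_pref x n⟩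
  · rintro ⟨σ, hσ, hx⟩
    exact cyl_subset_QL hσ hx

lemma lam_QL (lam : Measure Cantor)
    (hcyl : ∀ σ : List Bool, lam (cyl σ) = (2 : ENNReal)⁻¹ ^ σ.length) (m n : ℕ) :
    lam (QL m n) = ((Dk m 0 n).card : ENNReal) * (2 : ENNReal)⁻¹ ^ n := by
  rw [QL_decomp]
  rw [measure_biUnion_finset (by
      intro σ hσ τ hτ hne
      rw [Function.onFun, Set.disjoint_left]
      intro x hxσ hxτ
      rw [Finset.mem_coe, mem_Dk] at hσ hτ
      apply hne
      rw [mem_cyl_iff_pref x σ] at hxσ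
      rw [mem_cyl_iff_pref x τ] at hxτ
      rw [← hxσ, ← hxτ, hσ.1, hτ.1])
    (fun σ _ => measurableSet_cyl σ)]
  rw [Finset.sum_congr rfl (fun σ hσ => by
    rw [hcyl σ, (mem_Dk m 0 n σ).1 hσ |>.1])]
  rw [Finset.sum_const, nsmul_eq_mul]

end Counting

/-- for `0 < b < 1/2` and the symmetric branching measure with constant
parameter `b`, and `λ` the fair-coin measure on Cantor space, for every `c < 1` there is a
nonempty closed `Q` with `λ(Q) = 0` and capacity `T(Q) ≥ c`. -/
theorem stmt_9 (b : ℝ) (hb0 : 0 < b) (hb : b < 1 / 2)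
    (μ : Measure CC) (hμ : IsSymBranching (fun _ => b) μ)
    (lam : Measure Cantor) (hlam : IsProbabilityMeasure lam)
    (hcyl : ∀ σ : List Bool, lam (cyl σ) = (2 : ENNReal)⁻¹ ^ σ.length)
    (c : ℝ) (hc : c < 1) :
    ∃ Q : Set Cantor, Q.Nonempty ∧ IsClosed Q ∧ lam Q = 0 ∧ c ≤ cap μ Q := by
  classical
  haveI hP : IsProbabilityMeasure μ := hμ.1
  set u : ℝ := max c (1/2) with hu
  have hu0 : 0 < u := lt_of_lt_of_le (by norm_num) (le_max_right _ _)
  have hu1 : u < 1 := max_lt hc (by norm_num)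
  have hcu : c ≤ u := le_max_left _ _
  obtain ⟨m, hm⟩ := exists_good_m hb0 hb hu0 hu1
  set Qset : Set Cantor := {x : Cantor | ∀ i : ℕ, (i+1) % (m+1) = 0 → x i = false}
    with hQdef
  have hQsubQL : ∀ n, Qset ⊆ QL m n := fun n x hx i _ hc' => hx i hc'
  have hQLanti : ∀ n, QL m (n+1) ⊆ QL m n :=
    fun n x hx i hi hc' => hx i (Nat.lt_succ_of_lt hi) hc'
  refine ⟨Qset, ⟨fun _ => false, fun i _ => rfl⟩, ?_, ?_, ?_⟩
  · -- closed
    have hQ : Qset = ⋂ n, QL m n := by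
      ext x
      simp only [Set.mem_iInter]
      constructor
      · intro h n
        exact hQsubQL n h
      · intro h i hc'
        exact h (i+1) i (Nat.lt_succ_self i) hc'
    rw [hQ]
    exact isClosed_iInter fun n => isClosed_QL m n
  · -- lam Qset = 0
    have hbound : ∀ K : ℕ, lam Qset ≤ (2 : ENNReal)⁻¹ ^ K := by
      intro K
      have h1 : lam Qset ≤ lam (QL m (K*(m+1))) := measure_mono (hQsubQL _)
      rw [lam_QL lam hcyl m (K*(m+1))] at h1
      set n := K*(m+1) with hn
      set ct := cntk m 0 n with hct
      have hc1 : ((Dk m 0 n).card : ENNReal) * 2 ^ ct = 2 ^ n := by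
        exact_mod_cast congrArg (Nat.cast : ℕ → ENNReal) (card_Dk m n 0)
      have h2ne : (2 : ENNReal) ≠ 0 := two_ne_zero
      have h2top : (2 : ENNReal) ≠ ⊤ := ENNReal.ofNat_ne_top
      have hpc : ∀ j : ℕ, (2 : ENNReal) ^ j * (2 : ENNReal)⁻¹ ^ j = 1 := fun j => by
        rw [← mul_pow, ENNReal.mul_inv_cancel h2ne h2top, one_pow]
      have ha : ((Dk m 0 n).card : ENNReal) = 2 ^ n * (2 : ENNReal)⁻¹ ^ ct := by
        have h3 := congrArg (· * (2 : ENNReal)⁻¹ ^ ct) hc1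
        simpa [mul_assoc, hpc ct] using h3
      have hident : ((Dk m 0 n).card : ENNReal) * (2 : ENNReal)⁻¹ ^ n =
          (2 : ENNReal)⁻¹ ^ ct := by
        rw [ha]
        calc (2:ENNReal) ^ n * (2:ENNReal)⁻¹ ^ ct * (2:ENNReal)⁻¹ ^ n
            = (2:ENNReal) ^ n * (2:ENNReal)⁻¹ ^ n * (2:ENNReal)⁻¹ ^ ct := by ring
          _ = (2:ENNReal)⁻¹ ^ ct := by rw [hpc n, one_mul]
      rw [hident] at h1
      have hKct : K ≤ ct := cntk_lower m K
      have hsplit : (2 : ENNReal)⁻¹ ^ ct = (2 : ENNReal)⁻¹ ^ K * (2 : ENNReal)⁻¹ ^ (ct - K) := by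
        rw [← pow_add]
        congr 1
        omega
      have hle1 : (2 : ENNReal)⁻¹ ^ (ct - K) ≤ 1 :=
        pow_le_one' (ENNReal.inv_le_one.2 one_le_two) _
      calc lam Qset ≤ (2 : ENNReal)⁻¹ ^ ct := h1
        _ = (2 : ENNReal)⁻¹ ^ K * (2 : ENNReal)⁻¹ ^ (ct - K) := hsplit
        _ ≤ (2 : ENNReal)⁻¹ ^ K * 1 := mul_le_mul_right hle1 _
        _ = (2 : ENNReal)⁻¹ ^ K := mul_one _
    have htend : Filter.Tendsto (fun K : ℕ => (2 : ENNReal)⁻¹ ^ K) Filter.atTop (nhds 0) :=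
      ENNReal.tendsto_pow_atTop_nhds_zero_of_lt_one (by norm_num)
    exact le_antisymm (ge_of_tendsto' htend hbound) zero_le
  · -- capacity
    have hmiss : ∀ n : ℕ, μ ({K : CC | (K.1 ∩ QL m n).Nonempty}ᶜ) ≤ ENNReal.ofReal (1-u) := by
      intro n
      have hsum := measure_compl_hits_QL μ m n
      have htlt : ∀ A ∈ BadT m n, μ (UA n A) ≠ ⊤ := fun A _ => measure_ne_top μ _
      have ht : (μ ({K : CC | (K.1 ∩ QL m n).Nonempty}ᶜ)).toReal =
          ∑ A ∈ BadT m n, (μ (UA n A)).toReal := by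
        rw [hsum, ENNReal.toReal_sum htlt]
      have hw : ∀ A ∈ BadT m n, (μ (UA n A)).toReal =
          ∏ σ ∈ A.filter (fun σ => σ.length < n), symWeight (fun _ => b) A σ := by
        intro A hA
        rw [BadT, Finset.mem_filter] at hA
        exact hμ.2 n A ((mem_Trees n A).1 hA.1)
      have hsum2 : ∑ A ∈ BadT m n,
          (∏ σ ∈ A.filter (fun σ => σ.length < n), symWeight (fun _ => b) A σ) =
          ∑ A ∈ Trees n,
            (∏ σ ∈ A.filter (fun σ => σ.length < n), symWeight (fun _ => b) A σ) *
              (0:ℝ) ^ (A ∩ Dk m 0 n).card := by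
        rw [BadT, Finset.sum_filter]
        refine Finset.sum_congr rfl fun A _ => ?_
        by_cases hp : ∀ σ ∈ Dk m 0 n, σ ∉ A
        · rw [if_pos hp]
          have hcard : (A ∩ Dk m 0 n).card = 0 := by
            rw [Finset.card_eq_zero, Finset.eq_empty_iff_forall_notMem]
            intro σ hσ
            rw [Finset.mem_inter] at hσ
            exact hp σ hσ.2 hσ.1
          rw [hcard, pow_zero, mul_one]
        · rw [if_neg hp]
          push_neg at hp
          obtain ⟨σ, hσDk, hσA⟩ := hp
          have hcard : (A ∩ Dk m 0 n).card ≠ 0 :=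
            Finset.card_ne_zero_of_mem (Finset.mem_inter.2 ⟨hσA, hσDk⟩)
          rw [zero_pow hcard, mul_zero]
      have hkey := key_sum b m n 0
      have hGb := Gk_bound hb0 hb hu0 hu1 m hm n 0
      rw [Nat.zero_mod, Nat.sub_zero] at hGb
      have htot : (μ ({K : CC | (K.1 ∩ QL m n).Nonempty}ᶜ)).toReal ≤ 1 - u := by
        rw [ht, Finset.sum_congr rfl hw, hsum2, hkey]
        have := hm
        linarith [hGb]
      exact (ENNReal.le_ofReal_iff_toReal_le (measure_ne_top μ _) (by linarith)).2 htot
    have hdir : Directed (· ⊆ ·) (fun n => {K : CC | (K.1 ∩ QL m n).Nonempty}ᶜ) := by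
      refine (monotone_nat_of_le_succ fun n => ?_).directed_le
      intro K hK
      simp only [Set.mem_compl_iff, Set.mem_setOf_eq] at hK ⊢
      intro hne
      exact hK (hne.mono (Set.inter_subset_inter_right _ (hQLanti n)))
    have hU : μ (⋃ n, {K : CC | (K.1 ∩ QL m n).Nonempty}ᶜ) ≤ ENNReal.ofReal (1-u) := by
      rw [hdir.measure_iUnion]
      exact iSup_le hmiss
    have hsubset : (⋃ n, {K : CC | (K.1 ∩ QL m n).Nonempty}ᶜ)ᶜ ⊆
        {K : CC | (K.1 ∩ Qset).Nonempty} := by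
      intro K hK
      simp only [Set.mem_compl_iff, Set.mem_iUnion, not_exists, not_not] at hK
      have hKn : ∀ n, (K.1 ∩ QL m n).Nonempty := by
        intro n
        have := hK n
        simpa using this
      have hnice := IsCompact.nonempty_iInter_of_sequence_nonempty_isCompact_isClosed
        (fun n => K.1 ∩ QL m n)
        (fun n => Set.inter_subset_inter_right _ (hQLanti n))
        hKn
        ((K.2.2.inter (isClosed_QL m 0)).isCompact)
        (fun n => K.2.2.inter (isClosed_QL m n))
      obtain ⟨x, hx⟩ := hnice
      rw [Set.mem_iInter] at hx
      refine ⟨x, (hx 0).1, ?_⟩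
      intro i hc'
      exact (hx (i+1)).2 i (Nat.lt_succ_self i) hc'
    have h1le : (1 : ENNReal) ≤ μ {K : CC | (K.1 ∩ Qset).Nonempty} + ENNReal.ofReal (1-u) := by
      calc (1 : ENNReal) = μ Set.univ := measure_univ.symm
        _ = μ ((⋃ n, {K : CC | (K.1 ∩ QL m n).Nonempty}ᶜ)ᶜ ∪
              (⋃ n, {K : CC | (K.1 ∩ QL m n).Nonempty}ᶜ)) := by rw [Set.compl_union_self]
        _ ≤ μ ((⋃ n, {K : CC | (K.1 ∩ QL m n).Nonempty}ᶜ)ᶜ) +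
              μ (⋃ n, {K : CC | (K.1 ∩ QL m n).Nonempty}ᶜ) := measure_union_le _ _
        _ ≤ μ {K : CC | (K.1 ∩ Qset).Nonempty} + ENNReal.ofReal (1-u) :=
              add_le_add (measure_mono hsubset) hU
    have hge : ENNReal.ofReal u ≤ μ {K : CC | (K.1 ∩ Qset).Nonempty} := by
      have h2 : ENNReal.ofReal u = 1 - ENNReal.ofReal (1-u) := by
        have h3 : u = 1 - (1-u) := by ring
        rw [h3, ENNReal.ofReal_sub 1 (by linarith : (0:ℝ) ≤ 1-u), ENNReal.ofReal_one]
        norm_num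
      rw [h2]
      exact tsub_le_iff_right.2 h1le
    calc c ≤ u := hcu
      _ = (ENNReal.ofReal u).toReal := (ENNReal.toReal_ofReal hu0.le).symm
      _ ≤ (μ {K : CC | (K.1 ∩ Qset).Nonempty}).toReal :=
          ENNReal.toReal_mono (measure_ne_top μ _) hge
      _ = cap μ Qset := rfl
end

section
/- Let μ* be the symmetric branching measure on C with constant parameter b = 1/3 (so every internal node of the canonical tree of a random closed set independently has only its left child, only its right child, or both children, each with probability 1/3), and let T be the associated capacity. Then for μ*-almost every R ∈ C, T(R) = 0. -/
open Set MeasureTheory Topology Filter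

namespace Stmt10Aux

noncomputable section
open Classical in
/-- strings of exact length `n` -/
def strsN : ℕ → Finset (List Bool)
  | 0 => {[]}
  | n+1 => (strsN n).image (false :: ·) ∪ (strsN n).image (true :: ·)

lemma mem_strsN {n : ℕ} {l : List Bool} : l ∈ strsN n ↔ l.length = n := by
  induction n generalizing l with
  | zero => simp [strsN, List.length_eq_zero_iff]
  | succ n ih =>
    cases l with
    | nil => simp [strsN]
    | cons b t => cases b <;> simp [strsN, ih]

lemma card_strsN (n : ℕ) : (strsN n).card = 2 ^ n := by
  induction n with
  | zero => simp [strsN]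
  | succ n ih =>
    rw [strsN, Finset.card_union_of_disjoint, Finset.card_image_of_injective _ List.cons_injective,
      Finset.card_image_of_injective _ List.cons_injective, ih]
    · ring
    · rw [Finset.disjoint_left]
      rintro l hl hl'
      simp only [Finset.mem_image] at hl hl'
      obtain ⟨a, -, rfl⟩ := hl
      obtain ⟨b, -, h⟩ := hl'
      simp at h

open Classical in
def strsLE (n : ℕ) : Finset (List Bool) := (Finset.range (n+1)).biUnion strsN

lemma mem_strsLE {n : ℕ} {l : List Bool} : l ∈ strsLE n ↔ l.length ≤ n := by
  simp only [strsLE, Finset.mem_biUnion, Finset.mem_range, mem_strsN]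
  constructor
  · rintro ⟨k, hk, rfl⟩; omega
  · intro h; exact ⟨l.length, by omega, rfl⟩


lemma cyl_nil : cyl [] = Set.univ := by
  ext x
  simp only [cyl, Set.mem_setOf_eq, Set.mem_univ, iff_true]
  intro i; exact absurd i.2 (by simp)

lemma cyl_mono {σ τ : List Bool} (h : σ <+: τ) : cyl τ ⊆ cyl σ := by
  intro x hx i
  have hlt : (i : ℕ) < τ.length := lt_of_lt_of_le i.2 h.length_le
  have := hx ⟨i, hlt⟩
  simpa [List.get_eq_getElem, h.getElem i.2] using this

lemma mem_cyl_append {σ : List Bool} {x : Cantor} (hx : x ∈ cyl σ) :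
    x ∈ cyl (σ ++ [x σ.length]) := by
  intro i
  have hi : (i : ℕ) < σ.length + 1 := by simpa using i.2
  rcases lt_or_eq_of_le (Nat.lt_succ_iff.mp hi) with h | h
  · have := hx ⟨i, h⟩
    simp only [List.get_eq_getElem] at this ⊢
    rw [List.getElem_append_left h]
    exact this
  · have h2 : σ.length < (σ ++ [x σ.length]).length := by simp
    have hgoal : (σ ++ [x σ.length])[σ.length]'h2 = x σ.length := by
      rw [List.getElem_append_right (le_refl _)]
      simp
    simp only [List.get_eq_getElem, h, hgoal]

lemma mem_cyl_ofFn (x : Cantor) (n : ℕ) : x ∈ cyl (List.ofFn fun i : Fin n => x i) := by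
  intro i
  simp [List.get_eq_getElem, List.getElem_ofFn]

lemma isOpen_cyl (σ : List Bool) : IsOpen (cyl σ) := by
  have : cyl σ = ⋂ i : Fin σ.length, (fun x : Cantor => x i) ⁻¹' {σ.get i} := by
    ext x; simp [cyl]
  rw [this]
  exact isOpen_iInter_of_finite fun i =>
    (continuous_apply (i : ℕ)).isOpen_preimage _ (isOpen_discrete _)

/-- The "hit" set. -/
def Hit (σ : List Bool) : Set CC := {K : CC | (K.1 ∩ cyl σ).Nonempty}

lemma isOpen_Hit (σ : List Bool) : IsOpen (Hit σ) :=
  TopologicalSpace.isOpen_generateFrom_of_mem (Or.inl ⟨cyl σ, isOpen_cyl σ, rfl⟩)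

lemma measurableSet_Hit (σ : List Bool) : MeasurableSet (Hit σ) :=
  MeasurableSpace.measurableSet_generateFrom (isOpen_Hit σ)

open Classical in
def AK (n : ℕ) (K : CC) : Finset (List Bool) :=
  (strsLE n).filter (fun σ => (K.1 ∩ cyl σ).Nonempty)

lemma mem_AK {n : ℕ} {K : CC} {σ : List Bool} :
    σ ∈ AK n K ↔ σ.length ≤ n ∧ (K.1 ∩ cyl σ).Nonempty := by
  simp [AK, mem_strsLE]

lemma finTree_AK (n : ℕ) (K : CC) : FinTree n (AK n K) := by
  refine ⟨⟨[], ?_⟩, ?_, ?_, ?_⟩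
  · rw [mem_AK]
    exact ⟨by simp, by rw [cyl_nil]; simpa using K.2.1⟩
  · intro σ hσ; exact (mem_AK.mp hσ).1
  · intro σ τ hpre hτ
    rw [mem_AK] at hτ ⊢
    exact ⟨le_trans hpre.length_le hτ.1,
      hτ.2.mono (Set.inter_subset_inter_right _ (cyl_mono hpre))⟩
  · intro σ hσ hlt
    rw [mem_AK] at hσ
    obtain ⟨x, hxK, hxc⟩ := hσ.2
    have hx2 := mem_cyl_append hxc
    have hmem : σ ++ [x σ.length] ∈ AK n K :=
      mem_AK.mpr ⟨by simpa using hlt, ⟨x, hxK, hx2⟩⟩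
    cases hb : x σ.length
    · left; rwa [hb] at hmem
    · right; rwa [hb] at hmem

lemma mem_UA_AK (n : ℕ) (K : CC) : K ∈ UA n (AK n K) := by
  intro σ hσ
  rw [mem_AK]
  simp [hσ]

lemma eq_AK_of_mem_UA {n : ℕ} {A : Finset (List Bool)} {K : CC}
    (hA : FinTree n A) (hK : K ∈ UA n A) : A = AK n K := by
  ext σ
  by_cases hlen : σ.length ≤ n
  · rw [mem_AK, hK σ hlen]
    simp [hlen]
  · constructor
    · intro h; exact absurd (hA.2.1 σ h) hlen
    · intro h; exact absurd (mem_AK.mp h).1 hlen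

open Classical in
def Trees (n : ℕ) : Finset (Finset (List Bool)) :=
  (strsLE n).powerset.filter (fun A => FinTree n A)

lemma mem_Trees {n : ℕ} {A : Finset (List Bool)} : A ∈ Trees n ↔ FinTree n A := by
  simp only [Trees, Finset.mem_filter, Finset.mem_powerset, and_iff_right_iff_imp]
  intro hA σ hσ
  exact mem_strsLE.mpr (hA.2.1 σ hσ)

lemma UA_eq_iInter (n : ℕ) (A : Finset (List Bool)) :
    UA n A = ⋂ σ ∈ strsLE n, (if σ ∈ A then Hit σ else (Hit σ)ᶜ) := by
  ext K
  simp only [Set.mem_iInter, UA, Set.mem_setOf_eq]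
  constructor
  · intro h σ hσ
    rw [mem_strsLE] at hσ
    by_cases hA : σ ∈ A
    · simp only [hA, if_true]
      exact (h σ hσ).mp hA
    · simp only [hA, if_false, Set.mem_compl_iff, Hit, Set.mem_setOf_eq]
      exact fun hc => hA ((h σ hσ).mpr hc)
  · intro h σ hσ
    have h2 := h σ (mem_strsLE.mpr hσ)
    by_cases hA : σ ∈ A
    · simp only [hA, if_true] at h2
      exact ⟨fun _ => h2, fun _ => hA⟩
    · simp only [hA, if_false, Set.mem_compl_iff, Hit, Set.mem_setOf_eq] at h2
      exact ⟨fun h' => absurd h' hA, fun hc => absurd hc h2⟩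

lemma measurableSet_UA (n : ℕ) (A : Finset (List Bool)) : MeasurableSet (UA n A) := by
  rw [UA_eq_iInter]
  exact MeasurableSet.biInter ((strsLE n).countable_toSet)
    (fun σ _ => by split_ifs
                   exacts [measurableSet_Hit σ, (measurableSet_Hit σ).compl])

lemma pairwise_disjoint_UA (n : ℕ) :
    (↑(Trees n) : Set (Finset (List Bool))).PairwiseDisjoint (UA n) := by
  intro A hA B hB hne
  rw [Function.onFun, Set.disjoint_left]
  intro K hKA hKB
  apply hne
  rw [eq_AK_of_mem_UA (mem_Trees.mp (by exact_mod_cast hA)) hKA,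
    eq_AK_of_mem_UA (mem_Trees.mp (by exact_mod_cast hB)) hKB]

lemma iUnion_UA (n : ℕ) : ⋃ A ∈ Trees n, UA n A = Set.univ := by
  ext K
  simp only [Set.mem_iUnion, Set.mem_univ, iff_true, exists_prop]
  exact ⟨AK n K, mem_Trees.mpr (finTree_AK n K), mem_UA_AK n K⟩

lemma sum_measure_UA (μ : Measure CC) [IsProbabilityMeasure μ] (n : ℕ) :
    ∑ A ∈ Trees n, μ (UA n A) = 1 := by
  rw [← measure_biUnion_finset (pairwise_disjoint_UA n) (fun A _ => measurableSet_UA n A),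
    iUnion_UA, measure_univ]

lemma Hit_eq (n : ℕ) (σ : List Bool) (hσ : σ.length = n) :
    Hit σ = ⋃ A ∈ (Trees n).filter (fun A => σ ∈ A), UA n A := by
  ext K
  simp only [Set.mem_iUnion, Finset.mem_filter, exists_prop]
  constructor
  · intro hK
    exact ⟨AK n K, ⟨mem_Trees.mpr (finTree_AK n K), mem_AK.mpr ⟨hσ.le, hK⟩⟩, mem_UA_AK n K⟩
  · rintro ⟨A, ⟨hA, hσA⟩, hKA⟩
    exact (hKA σ hσ.le).mp hσA

def wint (n : ℕ) (A : Finset (List Bool)) : ℝ :=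
  (1/3 : ℝ) ^ ((A.filter (fun σ => σ.length < n)).card)

lemma toReal_measure_UA {μ : Measure CC} (hμ : IsSymBranching (fun _ => (1:ℝ)/3) μ)
    {n : ℕ} {A : Finset (List Bool)} (hA : FinTree n A) :
    (μ (UA n A)).toReal = wint n A := by
  rw [hμ.2 n A hA]
  calc ∏ σ ∈ A.filter (fun σ => σ.length < n), symWeight (fun _ => (1:ℝ)/3) A σ
      = ∏ _σ ∈ A.filter (fun σ => σ.length < n), (1/3 : ℝ) :=
        Finset.prod_congr rfl (fun σ _ => by unfold symWeight; split_ifs <;> norm_num)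
    _ = wint n A := by rw [Finset.prod_const, wint]

lemma sum_wint {μ : Measure CC} (hμ : IsSymBranching (fun _ => (1:ℝ)/3) μ) (n : ℕ) :
    ∑ A ∈ Trees n, wint n A = 1 := by
  haveI := hμ.1
  have h1 := congrArg ENNReal.toReal (sum_measure_UA μ n)
  rw [ENNReal.toReal_sum (fun A _ => measure_ne_top μ _), ENNReal.toReal_one] at h1
  rw [← h1]
  exact Finset.sum_congr rfl (fun A hA => (toReal_measure_UA hμ (mem_Trees.mp hA)).symm)

def csub (b : Bool) (A : Finset (List Bool)) : Finset (List Bool) :=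
  A.preimage (b :: ·) (List.cons_injective.injOn)

lemma mem_csub {b : Bool} {A : Finset (List Bool)} {τ : List Bool} :
    τ ∈ csub b A ↔ b :: τ ∈ A := Finset.mem_preimage

def glueb (b : Bool) (Ab Ao : Finset (List Bool)) : Finset (List Bool) :=
  insert [] ((Ab.image (b :: ·)) ∪ (Ao.image ((!b) :: ·)))

lemma nil_mem_glueb {b : Bool} {Ab Ao : Finset (List Bool)} : [] ∈ glueb b Ab Ao :=
  Finset.mem_insert_self _ _

lemma cons_mem_glueb {b c : Bool} {Ab Ao : Finset (List Bool)} {t : List Bool} :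
    (c :: t) ∈ glueb b Ab Ao ↔ (c = b ∧ t ∈ Ab) ∨ (c = !b ∧ t ∈ Ao) := by
  cases b <;> cases c <;> simp [glueb]

lemma csub_glueb_same {b : Bool} {Ab Ao : Finset (List Bool)} :
    csub b (glueb b Ab Ao) = Ab := by
  ext τ
  rw [mem_csub, cons_mem_glueb]
  cases b <;> simp

lemma csub_glueb_other {b : Bool} {Ab Ao : Finset (List Bool)} :
    csub (!b) (glueb b Ab Ao) = Ao := by
  ext τ
  rw [mem_csub, cons_mem_glueb]
  cases b <;> simp

lemma nil_mem_of_finTree {n : ℕ} {A : Finset (List Bool)} (hA : FinTree n A) : [] ∈ A :=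
  hA.2.2.1 [] hA.1.choose List.nil_prefix hA.1.choose_spec

lemma glueb_csub {n : ℕ} {A : Finset (List Bool)} (hA : FinTree (n+1) A) (b : Bool) :
    glueb b (csub b A) (csub (!b) A) = A := by
  ext l
  cases l with
  | nil => simp [nil_mem_glueb, nil_mem_of_finTree hA]
  | cons c t =>
    rw [cons_mem_glueb, mem_csub, mem_csub]
    constructor
    · rintro (⟨rfl, h⟩ | ⟨rfl, h⟩) <;> exact h
    · intro h
      rcases (by cases c <;> cases b <;> simp : c = b ∨ c = !b) with rfl | rfl
      · exact Or.inl ⟨rfl, h⟩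
      · exact Or.inr ⟨rfl, h⟩

lemma finTree_csub {n : ℕ} {A : Finset (List Bool)} (hA : FinTree (n+1) A) (c : Bool)
    (hne : (csub c A).Nonempty) : FinTree n (csub c A) := by
  refine ⟨hne, ?_, ?_, ?_⟩
  · intro σ hσ
    have := hA.2.1 _ (mem_csub.mp hσ)
    simpa using this
  · intro σ τ hpre hτ
    exact mem_csub.mpr (hA.2.2.1 (c :: σ) (c :: τ)
      (List.cons_prefix_cons.mpr ⟨rfl, hpre⟩) (mem_csub.mp hτ))
  · intro σ hσ hlt
    have h := hA.2.2.2 (c :: σ) (mem_csub.mp hσ) (by simpa using Nat.succ_lt_succ hlt)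
    rcases h with h | h
    · exact Or.inl (mem_csub.mpr (by simpa [List.cons_append] using h))
    · exact Or.inr (mem_csub.mpr (by simpa [List.cons_append] using h))

lemma finTree_glueb {n : ℕ} {Ab Ao : Finset (List Bool)} (b : Bool)
    (hAb : FinTree n Ab) (hAo : Ao = ∅ ∨ FinTree n Ao) : FinTree (n+1) (glueb b Ab Ao) := by
  refine ⟨⟨[], nil_mem_glueb⟩, ?_, ?_, ?_⟩
  · intro σ hσ
    cases σ with
    | nil => simp
    | cons c t =>
      rw [cons_mem_glueb] at hσ
      rcases hσ with ⟨-, h⟩ | ⟨-, h⟩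
      · simpa using Nat.succ_le_succ (hAb.2.1 t h)
      · rcases hAo with rfl | hAo
        · simp at h
        · simpa using Nat.succ_le_succ (hAo.2.1 t h)
  · intro σ τ hpre hτ
    cases σ with
    | nil => exact nil_mem_glueb
    | cons c σ0 =>
      cases τ with
      | nil => exact absurd (List.eq_nil_of_prefix_nil hpre) (by simp)
      | cons d τ0 =>
        obtain ⟨rfl, hpre0⟩ := List.cons_prefix_cons.mp hpre
        rw [cons_mem_glueb] at hτ ⊢
        rcases hτ with ⟨rfl, h⟩ | ⟨rfl, h⟩
        · exact Or.inl ⟨rfl, hAb.2.2.1 σ0 τ0 hpre0 h⟩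
        · rcases hAo with rfl | hAo
          · simp at h
          · exact Or.inr ⟨rfl, hAo.2.2.1 σ0 τ0 hpre0 h⟩
  · intro σ hσ hlt
    cases σ with
    | nil =>
      have hb : (b :: []) ∈ glueb b Ab Ao :=
        cons_mem_glueb.mpr (Or.inl ⟨rfl, nil_mem_of_finTree hAb⟩)
      cases b
      · exact Or.inl (by simpa using hb)
      · exact Or.inr (by simpa using hb)
    | cons c σ0 =>
      rw [cons_mem_glueb] at hσ
      have hlt0 : σ0.length < n := by simpa using hlt
      rcases hσ with ⟨rfl, h⟩ | ⟨rfl, h⟩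
      · rcases hAb.2.2.2 σ0 h hlt0 with h2 | h2
        · exact Or.inl (by
            rw [List.cons_append, cons_mem_glueb]
            exact Or.inl ⟨rfl, h2⟩)
        · exact Or.inr (by
            rw [List.cons_append, cons_mem_glueb]
            exact Or.inl ⟨rfl, h2⟩)
      · rcases hAo with rfl | hAo
        · simp at h
        · rcases hAo.2.2.2 σ0 h hlt0 with h2 | h2
          · exact Or.inl (by
              rw [List.cons_append, cons_mem_glueb]
              exact Or.inr ⟨rfl, h2⟩)
          · exact Or.inr (by
              rw [List.cons_append, cons_mem_glueb]
              exact Or.inr ⟨rfl, h2⟩)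

lemma card_filter_glueb (n : ℕ) (b : Bool) (Ab Ao : Finset (List Bool)) :
    ((glueb b Ab Ao).filter (fun σ => σ.length < n+1)).card
      = 1 + (Ab.filter (fun σ => σ.length < n)).card
          + (Ao.filter (fun σ => σ.length < n)).card := by
  rw [glueb, Finset.filter_insert, if_pos (by simp), Finset.filter_union,
    Finset.filter_image, Finset.filter_image]
  have h1 : ∀ (c : Bool) (S : Finset (List Bool)),
      (S.filter (fun a => (c :: a).length < n+1)) = S.filter (fun σ => σ.length < n) := by
    intro c S
    apply Finset.filter_congr
    intro τ _
    simp
  rw [h1, h1]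
  have hdis : Disjoint ((Ab.filter (fun σ => σ.length < n)).image (b :: ·))
      ((Ao.filter (fun σ => σ.length < n)).image ((!b) :: ·)) := by
    rw [Finset.disjoint_left]
    rintro l hl hl'
    simp only [Finset.mem_image] at hl hl'
    obtain ⟨a, -, rfl⟩ := hl
    obtain ⟨a', -, h⟩ := hl'
    cases b <;> simp at h
  rw [Finset.card_insert_of_notMem (by simp), Finset.card_union_of_disjoint hdis,
    Finset.card_image_of_injective _ List.cons_injective,
    Finset.card_image_of_injective _ List.cons_injective]
  ring

lemma wint_empty (n : ℕ) : wint n ∅ = 1 := by simp [wint]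

lemma wint_glueb (n : ℕ) (b : Bool) (Ab Ao : Finset (List Bool)) :
    wint (n+1) (glueb b Ab Ao) = (1/3 : ℝ) * wint n Ab * wint n Ao := by
  rw [wint, card_filter_glueb, wint, wint]
  ring

lemma finTree_zero {A : Finset (List Bool)} : FinTree 0 A ↔ A = {[]} := by
  constructor
  · intro hA
    have hsub : A ⊆ {[]} := by
      intro σ hσ
      have := hA.2.1 σ hσ
      simp only [Nat.le_zero, List.length_eq_zero_iff] at this
      simp [this]
    rcases Finset.subset_singleton_iff.mp hsub with rfl | rfl
    · exact absurd hA.1 (by simp)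
    · rfl
  · rintro rfl
    refine ⟨⟨[], by simp⟩, by simp, ?_, by simp⟩
    intro σ τ hpre hτ
    simp only [Finset.mem_singleton] at hτ ⊢
    subst hτ
    exact List.eq_nil_of_prefix_nil hpre

lemma trees_zero : Trees 0 = {({[]} : Finset (List Bool))} := by
  ext A
  simp [mem_Trees, finTree_zero]

lemma sumQ {μ : Measure CC} (hμ : IsSymBranching (fun _ => (1:ℝ)/3) μ) :
    ∀ σ : List Bool,
      ∑ A ∈ (Trees σ.length).filter (fun A => σ ∈ A), wint σ.length A
        = (2/3 : ℝ) ^ σ.length := by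
  intro σ
  induction σ with
  | nil =>
    rw [List.length_nil, pow_zero, trees_zero, Finset.filter_singleton, if_pos (by simp)]
    rw [Finset.sum_singleton]
    simp [wint]
  | cons b σ' ih =>
    simp only [List.length_cons]
    have key : ∑ A ∈ (Trees (σ'.length+1)).filter (fun A => b :: σ' ∈ A), wint (σ'.length+1) A
        = ∑ p ∈ ((Trees σ'.length).filter (fun A => σ' ∈ A)) ×ˢ (insert ∅ (Trees σ'.length)),
            ((1:ℝ)/3) * wint σ'.length p.1 * wint σ'.length p.2 := by
      refine (Finset.sum_nbij' (fun p => glueb b p.1 p.2)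
        (fun A => (csub b A, csub (!b) A)) ?_ ?_ ?_ ?_ ?_).symm
      · rintro ⟨Ab, Ao⟩ hp
        rw [Finset.mem_product] at hp
        obtain ⟨h1, h2⟩ := hp
        rw [Finset.mem_filter] at h1
        have hAo : Ao = ∅ ∨ FinTree σ'.length Ao := by
          rcases Finset.mem_insert.mp h2 with rfl | h
          · exact Or.inl rfl
          · exact Or.inr (mem_Trees.mp h)
        rw [Finset.mem_filter]
        exact ⟨mem_Trees.mpr (finTree_glueb b (mem_Trees.mp h1.1) hAo),
          cons_mem_glueb.mpr (Or.inl ⟨rfl, h1.2⟩)⟩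
      · intro A hA
        rw [Finset.mem_filter] at hA
        have hT := mem_Trees.mp hA.1
        rw [Finset.mem_product]
        constructor
        · rw [Finset.mem_filter]
          have hne : (csub b A).Nonempty := ⟨σ', mem_csub.mpr hA.2⟩
          exact ⟨mem_Trees.mpr (finTree_csub hT b hne), mem_csub.mpr hA.2⟩
        · rcases Finset.eq_empty_or_nonempty (csub (!b) A) with h | h
          · exact Finset.mem_insert.mpr (Or.inl h)
          · exact Finset.mem_insert_of_mem (mem_Trees.mpr (finTree_csub hT (!b) h))
      · rintro ⟨Ab, Ao⟩ -
        simp [csub_glueb_same, csub_glueb_other]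
      · intro A hA
        rw [Finset.mem_filter] at hA
        exact glueb_csub (mem_Trees.mp hA.1) b
      · rintro ⟨Ab, Ao⟩ -
        exact (wint_glueb σ'.length b Ab Ao).symm
    rw [key, Finset.sum_product]
    have hemp : (∅ : Finset (List Bool)) ∉ Trees σ'.length := by
      intro h
      exact absurd (mem_Trees.mp h).1 (by simp)
    have hins : ∑ y ∈ insert ∅ (Trees σ'.length), wint σ'.length y = 2 := by
      rw [Finset.sum_insert hemp, wint_empty, sum_wint hμ]
      norm_num
    calc ∑ x ∈ (Trees σ'.length).filter (fun A => σ' ∈ A),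
          ∑ y ∈ insert ∅ (Trees σ'.length), (1:ℝ)/3 * wint σ'.length x * wint σ'.length y
        = ∑ x ∈ (Trees σ'.length).filter (fun A => σ' ∈ A),
            (1:ℝ)/3 * wint σ'.length x * 2 := by
          refine Finset.sum_congr rfl fun x _ => ?_
          rw [← Finset.mul_sum, hins]
      _ = (2/3 : ℝ) * ∑ x ∈ (Trees σ'.length).filter (fun A => σ' ∈ A), wint σ'.length x := by
          rw [Finset.mul_sum]
          exact Finset.sum_congr rfl fun x _ => by ring
      _ = (2/3 : ℝ) ^ (σ'.length + 1) := by
          rw [ih, pow_succ]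
          ring

lemma measure_Hit {μ : Measure CC} (hμ : IsSymBranching (fun _ => (1:ℝ)/3) μ) (σ : List Bool) :
    μ (Hit σ) = ENNReal.ofReal ((2/3 : ℝ) ^ σ.length) := by
  haveI := hμ.1
  have hd : ((↑((Trees σ.length).filter (fun A => σ ∈ A))) :
      Set (Finset (List Bool))).PairwiseDisjoint (UA σ.length) :=
    (pairwise_disjoint_UA σ.length).subset
      (Finset.coe_subset.mpr (Finset.filter_subset _ _))
  have h1 : μ (Hit σ) = ∑ A ∈ (Trees σ.length).filter (fun A => σ ∈ A), μ (UA σ.length A) := by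
    rw [Hit_eq σ.length σ rfl]
    exact measure_biUnion_finset hd (fun A _ => measurableSet_UA _ A)
  have h2 : (μ (Hit σ)).toReal = (2/3 : ℝ) ^ σ.length := by
    rw [h1, ENNReal.toReal_sum (fun A _ => measure_ne_top μ _), ← sumQ hμ σ]
    exact Finset.sum_congr rfl fun A hA =>
      toReal_measure_UA hμ (mem_Trees.mp (Finset.mem_filter.mp hA).1)
  rw [← h2, ENNReal.ofReal_toReal (measure_ne_top μ _)]

end
end Stmt10Aux

open Stmt10Aux in
theorem stmt_10_aux (μ : Measure CC) (hμ : IsSymBranching (fun _ => (1 : ℝ) / 3) μ) :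
    ∀ᵐ R ∂μ, cap μ R.1 = 0 := by
  classical
  haveI := hμ.1
  set h : CC → ENNReal := fun R => μ {K : CC | (K.1 ∩ R.1).Nonempty} with hh
  set g : ℕ → CC → ENNReal :=
    fun m R => ∑ σ ∈ strsN m, (Hit σ).indicator (fun _ => μ (Hit σ)) R with hg
  have hg_meas : ∀ m, Measurable (g m) := fun m =>
    Finset.measurable_sum _ (fun σ _ => measurable_const.indicator (measurableSet_Hit σ))
  have h_le : ∀ m R, h R ≤ g m R := by
    intro m R
    have hsub : {K : CC | (K.1 ∩ R.1).Nonempty}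
        ⊆ ⋃ σ ∈ (strsN m).filter (fun σ => R ∈ Hit σ), Hit σ := by
      rintro K ⟨x, hxK, hxR⟩
      refine Set.mem_iUnion₂.mpr ⟨List.ofFn (fun i : Fin m => x i), ?_, ?_⟩
      · rw [Finset.mem_filter]
        exact ⟨mem_strsN.mpr (by simp), ⟨x, hxR, mem_cyl_ofFn x m⟩⟩
      · exact ⟨x, hxK, mem_cyl_ofFn x m⟩
    calc h R ≤ μ (⋃ σ ∈ (strsN m).filter (fun σ => R ∈ Hit σ), Hit σ) := measure_mono hsub
      _ ≤ ∑ σ ∈ (strsN m).filter (fun σ => R ∈ Hit σ), μ (Hit σ) :=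
          measure_biUnion_finset_le _ _
      _ = ∑ σ ∈ strsN m, if R ∈ Hit σ then μ (Hit σ) else 0 := Finset.sum_filter _ _
      _ = g m R := Finset.sum_congr rfl fun σ _ => by
          by_cases hRσ : R ∈ Hit σ <;> simp [hRσ]
  have hint : ∀ m, ∫⁻ R, g m R ∂μ = ENNReal.ofReal ((8/9 : ℝ) ^ m) := by
    intro m
    rw [hg]
    rw [lintegral_finset_sum _ (fun σ _ => measurable_const.indicator (measurableSet_Hit σ))]
    have hterm : ∀ σ ∈ strsN m,
        ∫⁻ R, (Hit σ).indicator (fun _ => μ (Hit σ)) R ∂μ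
          = ENNReal.ofReal ((2/3 : ℝ) ^ m) * ENNReal.ofReal ((2/3 : ℝ) ^ m) := by
      intro σ hσ
      rw [lintegral_indicator_const (measurableSet_Hit σ), measure_Hit hμ σ, mem_strsN.mp hσ]
    rw [Finset.sum_congr rfl hterm, Finset.sum_const, card_strsN, nsmul_eq_mul]
    rw [← ENNReal.ofReal_mul (by positivity)]
    rw [show ((2^m : ℕ) : ENNReal) = ENNReal.ofReal ((2:ℝ)^m) by
      rw [ENNReal.ofReal_pow (by norm_num)]
      norm_num]
    rw [← ENNReal.ofReal_mul (by positivity)]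
    congr 1
    rw [← mul_pow, ← mul_pow]
    norm_num
  have htend0 : Tendsto (fun m => ENNReal.ofReal ((8/9 : ℝ) ^ m)) atTop (𝓝 0) := by
    have := ENNReal.tendsto_ofReal
      (tendsto_pow_atTop_nhds_zero_of_lt_one (by norm_num : (0:ℝ) ≤ 8/9) (by norm_num))
    simpa using this
  have hzero : ∀ k : ℕ, μ {R : CC | (((k+1 : ℕ) : ENNReal))⁻¹ ≤ h R} = 0 := by
    intro k
    have hε0 : (((k+1 : ℕ) : ENNReal))⁻¹ ≠ 0 := by simp
    have hεtop : (((k+1 : ℕ) : ENNReal))⁻¹ ≠ ⊤ := by simp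
    have hb : ∀ m, μ {R : CC | (((k+1 : ℕ) : ENNReal))⁻¹ ≤ h R}
        ≤ ENNReal.ofReal ((8/9 : ℝ) ^ m) / (((k+1 : ℕ) : ENNReal))⁻¹ := by
      intro m
      calc μ {R : CC | (((k+1 : ℕ) : ENNReal))⁻¹ ≤ h R}
          ≤ μ {R : CC | (((k+1 : ℕ) : ENNReal))⁻¹ ≤ g m R} :=
            measure_mono (fun R hR => le_trans hR (h_le m R))
        _ ≤ (∫⁻ R, g m R ∂μ) / (((k+1 : ℕ) : ENNReal))⁻¹ :=
            meas_ge_le_lintegral_div (hg_meas m).aemeasurable hε0 hεtop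
        _ = _ := by rw [hint m]
    have htend : Tendsto (fun m => ENNReal.ofReal ((8/9 : ℝ) ^ m) / (((k+1 : ℕ) : ENNReal))⁻¹)
        atTop (𝓝 0) := by
      simp only [div_eq_mul_inv]
      have := ENNReal.Tendsto.mul_const (b := ((((k+1 : ℕ) : ENNReal))⁻¹)⁻¹) htend0
        (Or.inr (by simp))
      rwa [zero_mul] at this
    exact le_antisymm (ge_of_tendsto' htend hb) (by simp)
  have hae : ∀ᵐ R ∂μ, h R = 0 := by
    rw [MeasureTheory.ae_iff]
    refine measure_mono_null ?_ (measure_iUnion_null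
      (fun k : ℕ => hzero k))
    intro R hR
    simp only [Set.mem_setOf_eq] at hR
    obtain ⟨n, hn⟩ := ENNReal.exists_inv_nat_lt hR
    refine Set.mem_iUnion.mpr ⟨n, ?_⟩
    simp only [Set.mem_setOf_eq]
    refine le_trans ?_ hn.le
    gcongr
    exact_mod_cast Nat.le_succ n
  filter_upwards [hae] with R hR
  simp only [cap, hh] at hR ⊢
  rw [hR]
  simp


/-- for the symmetric branching measure with constant parameter `b = 1/3`,
almost every closed set has capacity zero. -/
theorem stmt_10 (μ : Measure CC) (hμ : IsSymBranching (fun _ => (1 : ℝ) / 3) μ) :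
    ∀ᵐ R ∂μ, cap μ R.1 = 0 := stmt_10_aux μ hμ
end
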